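/- arXiv:1407.1690 — 4 statements merged into one kernel-verified Lean document; each statement's English description precedes it below -/
import Mathlib

section
/- Let A be of C₀-class and z, z' ∈ ℂ with Im z' ≤ Im z. Then the operator U(A;z,z') defined on D_fin is closable, and its adjoint satisfies the inclusion U(A;z,z')* ⊇ closure of U(A*; (z')*, z*), where * on complex numbers denotes complex conjugation. -/
open MeasureTheory Complex Filter Set

noncomputable section

/-! ## Abstract setup

`FreeData 𝓗` records the spectral data of a non-negative self-adjoint operator `H₀` on a
complex Hilbert space `𝓗`: the spectral subspaces `V E = Ran E_{H₀}([0,E])`, (a linear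
extension of) the complex one-parameter group `W z = e^{izH₀}` and (a linear extension of)
`H₀` itself, together with their characterizing properties on the dense subspace
`D_fin = ⋃_{E ≥ 0} V E` of entire analytic vectors. -/

structure FreeData (𝓗 : Type*) [NormedAddCommGroup 𝓗] [InnerProductSpace ℂ 𝓗]
    [CompleteSpace 𝓗] where
  V : ℝ → Submodule ℂ 𝓗
  V_mono : Monotone V
  V_closed : ∀ E, IsClosed (V E : Set 𝓗)
  V_neg : ∀ E < (0:ℝ), V E = ⊥
  V_dense : Dense (⋃ E : ℝ, (V E : Set 𝓗))
  /-- (a linear extension of) the operator `e^{izH₀}`; only its action on `D_fin` matters -/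
  W : ℂ → 𝓗 →ₗ[ℂ] 𝓗
  /-- (a linear extension of) the operator `H₀`; only its action on `D_fin` matters -/
  H0 : 𝓗 →ₗ[ℂ] 𝓗
  W_zero : ∀ x, W 0 x = x
  W_mem : ∀ (z : ℂ) (E : ℝ), ∀ x ∈ V E, W z x ∈ V E
  W_add : ∀ (z w : ℂ) (E : ℝ), ∀ x ∈ V E, W z (W w x) = W (z + w) x
  W_norm : ∀ (z : ℂ) (E : ℝ), 0 ≤ E → ∀ x ∈ V E, ‖W z x‖ ≤ Real.exp (|z.im| * E) * ‖x‖
  W_inner_real : ∀ (t : ℝ) (E : ℝ), ∀ x ∈ V E, ∀ y ∈ V E,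
    (inner ℂ (W (t:ℂ) x) (W (t:ℂ) y) : ℂ) = inner ℂ x y
  H0_mem : ∀ E, ∀ x ∈ V E, H0 x ∈ V E
  H0_norm : ∀ E, 0 ≤ E → ∀ x ∈ V E, ‖H0 x‖ ≤ E * ‖x‖
  H0_symm : ∀ E, ∀ x ∈ V E, ∀ y ∈ V E, (inner ℂ (H0 x) y : ℂ) = inner ℂ x (H0 y)
  H0_nonneg : ∀ E, ∀ x ∈ V E, 0 ≤ (inner ℂ x (H0 x) : ℂ).re
  W_deriv : ∀ E, ∀ x ∈ V E, ∀ z : ℂ, HasDerivAt (fun w => W w x) (Complex.I • H0 (W z x)) z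

namespace FreeData

variable {𝓗 : Type*} [NormedAddCommGroup 𝓗] [InnerProductSpace ℂ 𝓗] [CompleteSpace 𝓗]

/-- `D_fin = ⋃_{E ≥ 0} Ran E_{H₀}([0,E])`. -/
def Dfin (F : FreeData 𝓗) : Set 𝓗 := ⋃ E ∈ Set.Ici (0:ℝ), (F.V E : Set 𝓗)

end FreeData

/-- A `C₀`-class operator relative to the free Hamiltonian data `F`:
`op` is (a linear extension of) the operator `A` with domain `dom`, and `adj` is
(a linear extension of) its adjoint `A*` with domain `domAdj`.  Conditions (I)–(III) of
the definition of the `C₀`-class are recorded: both `A` and `A*` are densely defined and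
closed, both are `H₀^{1/2}`-bounded (expressed through the spectral subspaces, with
`C = ‖A(H₀+1)^{-1/2}‖`), and both map `V E` into `V (E + b)`. -/
structure C0 {𝓗 : Type*} [NormedAddCommGroup 𝓗] [InnerProductSpace ℂ 𝓗] [CompleteSpace 𝓗]
    (F : FreeData 𝓗) where
  op : 𝓗 →ₗ[ℂ] 𝓗
  adj : 𝓗 →ₗ[ℂ] 𝓗
  dom : Submodule ℂ 𝓗
  domAdj : Submodule ℂ 𝓗
  dom_dense : Dense (dom : Set 𝓗)
  domAdj_dense : Dense (domAdj : Set 𝓗)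
  isClosed : IsClosed {p : 𝓗 × 𝓗 | p.1 ∈ dom ∧ p.2 = op p.1}
  isClosedAdj : IsClosed {p : 𝓗 × 𝓗 | p.1 ∈ domAdj ∧ p.2 = adj p.1}
  adjoint_spec : ∀ x ∈ dom, ∀ y ∈ domAdj, (inner ℂ (adj y) x : ℂ) = inner ℂ y (op x)
  Dfin_sub_dom : F.Dfin ⊆ dom
  Dfin_sub_domAdj : F.Dfin ⊆ domAdj
  C : ℝ
  C_nonneg : 0 ≤ C
  norm_bound : ∀ E, 0 ≤ E → ∀ x ∈ F.V E, ‖op x‖ ≤ C * Real.sqrt (E + 1) * ‖x‖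
  norm_boundAdj : ∀ E, 0 ≤ E → ∀ x ∈ F.V E, ‖adj x‖ ≤ C * Real.sqrt (E + 1) * ‖x‖
  b : ℝ
  b_nonneg : 0 ≤ b
  map_V : ∀ E, 0 ≤ E → ∀ x ∈ F.V E, op x ∈ F.V (E + b)
  map_VAdj : ∀ E, 0 ≤ E → ∀ x ∈ F.V E, adj x ∈ F.V (E + b)

namespace C0

variable {𝓗 : Type*} [NormedAddCommGroup 𝓗] [InnerProductSpace ℂ 𝓗] [CompleteSpace 𝓗]
variable {F : FreeData 𝓗}

/-- `A(z) = e^{izH₀} A e^{-izH₀}` (as a linear extension; only its values on `D_fin`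
matter). -/
def Az (A : C0 F) (z : ℂ) : 𝓗 →ₗ[ℂ] 𝓗 := F.W z ∘ₗ A.op ∘ₗ F.W (-z)

/-- `A*(z) = e^{izH₀} A* e^{-izH₀}`. -/
def AzStar (A : C0 F) (z : ℂ) : 𝓗 →ₗ[ℂ] 𝓗 := F.W z ∘ₗ A.adj ∘ₗ F.W (-z)

/-- `T(ζ,ζ') = e^{iζH₀} T e^{iζ'H₀}`. -/
def pair (A : C0 F) (ζ ζ' : ℂ) : 𝓗 → 𝓗 := fun x => F.W ζ (A.op (F.W ζ' x))

end C0

/-- The complex line integral `∫_{z'}^{z} f(ζ) dζ` (along the straight segment; for the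
analytic integrands appearing below it only depends on the endpoints). -/
def lineIntegral {𝓗 : Type*} [NormedAddCommGroup 𝓗] [NormedSpace ℂ 𝓗]
    (f : ℂ → 𝓗) (z' z : ℂ) : 𝓗 :=
  (z - z') • ∫ t in (0:ℝ)..1, f (z' + t • (z - z'))

/-- The iterated integrals
`Vₙ(Φ;z,z') = (-i)ⁿ ∫_{z'}^z dζ₁ ∫_{z'}^{ζ₁} dζ₂ ⋯ ∫_{z'}^{ζ_{n-1}} dζₙ Φ(ζ₁)⋯Φ(ζₙ)`,
defined through the recursion `V_{n+1}(z,z') = (-i) ∫_{z'}^z dζ Φ(ζ) Vₙ(ζ,z')`. -/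
def Vseq {𝓗 : Type*} [NormedAddCommGroup 𝓗] [NormedSpace ℂ 𝓗]
    (Φ : ℂ → 𝓗 → 𝓗) : ℕ → ℂ → ℂ → 𝓗 → 𝓗
  | 0 => fun _ _ x => x
  | n + 1 => fun z z' x =>
      (-Complex.I) • lineIntegral (fun ζ => Φ ζ (Vseq Φ n ζ z' x)) z' z

namespace C0

variable {𝓗 : Type*} [NormedAddCommGroup 𝓗] [InnerProductSpace ℂ 𝓗] [CompleteSpace 𝓗]
variable {F : FreeData 𝓗}

/-- `Vₙ(A;z,z')`. -/
def Vn (A : C0 F) : ℕ → ℂ → ℂ → 𝓗 → 𝓗 := Vseq (fun ζ x => A.Az ζ x)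

/-- `Vₙ(A*;z,z')`. -/
def VnStar (A : C0 F) : ℕ → ℂ → ℂ → 𝓗 → 𝓗 := Vseq (fun ζ x => A.AzStar ζ x)

/-- `U(A;z,z') = Σₙ Vₙ(A;z,z')` on `D_fin`. -/
def U (A : C0 F) (z z' : ℂ) : 𝓗 → 𝓗 := fun x => ∑' n : ℕ, A.Vn n z z' x

/-- `U(A*;z,z') = Σₙ Vₙ(A*;z,z')` on `D_fin`. -/
def Ustar (A : C0 F) (z z' : ℂ) : 𝓗 → 𝓗 := fun x => ∑' n : ℕ, A.VnStar n z z' x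

end C0

/-- The closure of the graph of (the restriction to `D` of) the map `f`;
`(x, y) ∈ graphClos D f` says that `y` is a value at `x` of the closure of `f ↾ D`. -/
def graphClos {𝓗 : Type*} [NormedAddCommGroup 𝓗]
    (D : Set 𝓗) (f : 𝓗 → 𝓗) : Set (𝓗 × 𝓗) :=
  closure {p : 𝓗 × 𝓗 | p.1 ∈ D ∧ p.2 = f p.1}

section AuxBasic

variable {𝓗 : Type*} [NormedAddCommGroup 𝓗] [InnerProductSpace ℂ 𝓗] [CompleteSpace 𝓗]
variable {F : FreeData 𝓗}

local notation "⟪" x ", " y "⟫" => (inner ℂ x y : ℂ)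

namespace FreeData

lemma W_cancel (E : ℝ) {x : 𝓗} (hx : x ∈ F.V E) (z : ℂ) :
    F.W z (F.W (-z) x) = x := by
  rw [F.W_add z (-z) E x hx, add_neg_cancel, F.W_zero]

lemma W_continuous (E : ℝ) {x : 𝓗} (hx : x ∈ F.V E) :
    Continuous fun z : ℂ => F.W z x :=
  continuous_iff_continuousAt.2 fun z => (F.W_deriv E x hx z).continuousAt

lemma mem_Dfin {E : ℝ} (hE : 0 ≤ E) {x : 𝓗} (hx : x ∈ F.V E) : x ∈ F.Dfin := by
  simp only [Dfin, Set.mem_iUnion]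
  exact ⟨E, hE, hx⟩

lemma Dfin_dense : Dense F.Dfin := by
  refine F.V_dense.mono ?_
  rintro x hx
  simp only [Set.mem_iUnion] at hx
  obtain ⟨E, hE⟩ := hx
  rcases le_or_gt 0 E with h | h
  · exact F.mem_Dfin h hE
  · rw [F.V_neg E h] at hE
    simp only [Submodule.bot_coe, Set.mem_singleton_iff] at hE
    subst hE
    exact F.mem_Dfin le_rfl (Submodule.zero_mem _)

end FreeData

/-- A linear map bounded on a submodule transfers continuity of paths in the submodule. -/
lemma cont_comp_linear_on {S : Submodule ℂ 𝓗} {T : 𝓗 →ₗ[ℂ] 𝓗} {c : ℝ}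
    (hT : ∀ y ∈ S, ‖T y‖ ≤ c * ‖y‖)
    {f : ℝ → 𝓗} (hf : Continuous f) (hfS : ∀ t, f t ∈ S) :
    Continuous fun t => T (f t) := by
  rw [continuous_iff_continuousAt]
  intro t₀
  have key : Filter.Tendsto (fun t => T (f t) - T (f t₀)) (nhds t₀) (nhds 0) := by
    refine squeeze_zero_norm (a := fun t => c * ‖f t - f t₀‖) (fun t => ?_) ?_
    · show ‖T (f t) - T (f t₀)‖ ≤ c * ‖f t - f t₀‖
      rw [← map_sub]
      exact hT _ (Submodule.sub_mem _ (hfS t) (hfS t₀))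
    · have := (continuous_const.mul (hf.sub continuous_const).norm).tendsto t₀ (f := fun t => c * ‖f t - f t₀‖)
      simpa using this
  have := key.add (tendsto_const_nhds (x := T (f t₀)))
  simp only [zero_add, sub_add_cancel] at this
  exact this

lemma FreeData.cont_W_comp {E : ℝ} (hE : 0 ≤ E) {α : ℝ → ℂ} (hα : Continuous α)
    {f : ℝ → 𝓗} (hf : Continuous f) (hfS : ∀ t, f t ∈ F.V E) :
    Continuous fun t => F.W (α t) (f t) := by
  rw [continuous_iff_continuousAt]
  intro t₀
  have key : Filter.Tendsto (fun t => F.W (α t) (f t - f t₀)) (nhds t₀) (nhds 0) := by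
    have him : ∀ᶠ t in nhds t₀, |(α t).im| < |(α t₀).im| + 1 := by
      have hc : Continuous fun t => |(α t).im| := (Complex.continuous_im.comp hα).abs
      exact Filter.Tendsto.eventually_lt_const (by linarith) (hc.tendsto t₀)
    refine squeeze_zero_norm' (a := fun t => Real.exp ((|(α t₀).im| + 1) * E) * ‖f t - f t₀‖) ?_ ?_
    · filter_upwards [him] with t ht
      calc ‖F.W (α t) (f t - f t₀)‖
          ≤ Real.exp (|(α t).im| * E) * ‖f t - f t₀‖ :=
            F.W_norm _ E hE _ (Submodule.sub_mem _ (hfS t) (hfS t₀))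
        _ ≤ Real.exp ((|(α t₀).im| + 1) * E) * ‖f t - f t₀‖ := by
            have : Real.exp (|(α t).im| * E) ≤ Real.exp ((|(α t₀).im| + 1) * E) :=
              Real.exp_le_exp.2 (mul_le_mul_of_nonneg_right ht.le hE)
            exact mul_le_mul_of_nonneg_right this (norm_nonneg _)
    · have := (continuous_const.mul (hf.sub continuous_const).norm).tendsto t₀
        (f := fun t => Real.exp ((|(α t₀).im| + 1) * E) * ‖f t - f t₀‖)
      simpa using this
  have h2 : Filter.Tendsto (fun t => F.W (α t) (f t₀)) (nhds t₀)
      (nhds (F.W (α t₀) (f t₀))) := ((F.W_continuous E (hfS t₀)).comp hα).tendsto t₀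
  have := key.add h2
  simp only [zero_add] at this
  refine this.congr (fun t => ?_)
  rw [← map_add, sub_add_cancel]

/-- integral of a continuous function valued in a closed submodule stays in it. -/
lemma intervalIntegral_mem {S : Submodule ℂ 𝓗} (hS : IsClosed (S : Set 𝓗))
    {f : ℝ → 𝓗} (hf : Continuous f) (hfS : ∀ u, f u ∈ S) (a b : ℝ) :
    (∫ u in a..b, f u) ∈ S := by
  haveI : CompleteSpace S := hS.completeSpace_coe
  have hg : Continuous fun u => (⟨f u, hfS u⟩ : S) := hf.subtype_mk _
  have : (∫ u in a..b, f u) = S.subtypeL (∫ u in a..b, (⟨f u, hfS u⟩ : S)) := by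
    rw [← ContinuousLinearMap.intervalIntegral_comp_comm _ (hg.intervalIntegrable a b)]
    rfl
  rw [this]
  exact SetLike.coe_mem _

/-- a linear map bounded on a closed submodule commutes with interval integrals of
continuous functions valued in it. -/
lemma map_intervalIntegral {S : Submodule ℂ 𝓗} (hS : IsClosed (S : Set 𝓗))
    (T : 𝓗 →ₗ[ℂ] 𝓗) {c : ℝ} (hT : ∀ y ∈ S, ‖T y‖ ≤ c * ‖y‖)
    {f : ℝ → 𝓗} (hf : Continuous f) (hfS : ∀ u, f u ∈ S) (a b : ℝ) :
    T (∫ u in a..b, f u) = ∫ u in a..b, T (f u) := by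
  haveI : CompleteSpace S := hS.completeSpace_coe
  let T' : S →L[ℂ] 𝓗 := LinearMap.mkContinuous (T ∘ₗ S.subtype) c (fun y => hT y y.2)
  have hg : Continuous fun u => (⟨f u, hfS u⟩ : S) := hf.subtype_mk _
  have h1 : (∫ u in a..b, f u) = S.subtypeL (∫ u in a..b, (⟨f u, hfS u⟩ : S)) := by
    rw [← ContinuousLinearMap.intervalIntegral_comp_comm _ (hg.intervalIntegrable a b)]
    rfl
  have h2 : T (S.subtypeL (∫ u in a..b, (⟨f u, hfS u⟩ : S)))
      = T' (∫ u in a..b, (⟨f u, hfS u⟩ : S)) := rfl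
  rw [h1, h2, ← ContinuousLinearMap.intervalIntegral_comp_comm _ (hg.intervalIntegrable a b)]
  rfl

end AuxBasic
section AuxAdjoint

variable {𝓗 : Type*} [NormedAddCommGroup 𝓗] [InnerProductSpace ℂ 𝓗] [CompleteSpace 𝓗]
variable {F : FreeData 𝓗}

local notation "⟪" x ", " y "⟫" => (inner ℂ x y : ℂ)

/-- `⟪e^{iw̄H₀}q, e^{iwH₀}a⟫` is independent of `w`. -/
lemma FreeData.inner_W_W {E₁ E₂ : ℝ} {q a : 𝓗} (hq : q ∈ F.V E₁) (ha : a ∈ F.V E₂)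
    (w : ℂ) : ⟪F.W (starRingEnd ℂ w) q, F.W w a⟫ = ⟪q, a⟫ := by
  set E := max E₁ E₂ with hE
  have hq' : q ∈ F.V E := F.V_mono (le_max_left _ _) hq
  have ha' : a ∈ F.V E := F.V_mono (le_max_right _ _) ha
  set f : ℂ → ℂ := fun w => ⟪F.W (starRingEnd ℂ w) q, F.W w a⟫ with hf
  have line : ∀ w₀ e : ℂ, f (w₀ + e) = f w₀ := by
    intro w₀ e
    have hderiv : ∀ r : ℝ, HasDerivAt (fun r : ℝ => f (w₀ + (r : ℂ) * e)) 0 r := by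
      intro r
      set α : ℝ → ℂ := fun r => starRingEnd ℂ w₀ + (r : ℂ) * starRingEnd ℂ e with hα
      set βp : ℝ → ℂ := fun r => w₀ + (r : ℂ) * e with hβ
      have hαd : HasDerivAt α (starRingEnd ℂ e) r := by
        have h0 : HasDerivAt (fun r : ℝ => (r : ℂ)) 1 r := by
          simpa using (hasDerivAt_id r).ofReal_comp
        simpa [hα] using (h0.mul_const (starRingEnd ℂ e)).const_add (starRingEnd ℂ w₀)
      have hβd : HasDerivAt βp e r := by
        have h0 : HasDerivAt (fun r : ℝ => (r : ℂ)) 1 r := by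
          simpa using (hasDerivAt_id r).ofReal_comp
        simpa [hβ] using (h0.mul_const e).const_add w₀
      have hG : HasDerivAt (fun r : ℝ => F.W (α r) q)
          ((starRingEnd ℂ e) • (Complex.I • F.H0 (F.W (α r) q))) r :=
        HasDerivAt.scomp r (F.W_deriv E q hq' (α r)) hαd
      have hH : HasDerivAt (fun r : ℝ => F.W (βp r) a)
          (e • (Complex.I • F.H0 (F.W (βp r) a))) r :=
        HasDerivAt.scomp r (F.W_deriv E a ha' (βp r)) hβd
      have h := HasDerivAt.inner ℂ hG hH
      have hval : ⟪F.W (α r) q, e • (Complex.I • F.H0 (F.W (βp r) a))⟫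
          + ⟪(starRingEnd ℂ e) • (Complex.I • F.H0 (F.W (α r) q)), F.W (βp r) a⟫
          = 0 := by
        rw [inner_smul_right, inner_smul_right, inner_smul_left, inner_smul_left]
        rw [F.H0_symm E (F.W (α r) q) (F.W_mem _ _ _ hq') (F.W (βp r) a) (F.W_mem _ _ _ ha')]
        simp only [Complex.conj_conj, map_mul, Complex.conj_I]
        ring
      have : (fun r : ℝ => f (w₀ + (r : ℂ) * e))
          = fun r : ℝ => ⟪F.W (α r) q, F.W (βp r) a⟫ := by
        funext r
        simp only [hf, hα, hβ, map_add, map_mul, Complex.conj_ofReal]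
      rw [this]
      rw [hval] at h
      exact h
    have hd : Differentiable ℝ fun r : ℝ => f (w₀ + (r : ℂ) * e) :=
      fun r => (hderiv r).differentiableAt
    have hc := is_const_of_deriv_eq_zero hd (fun r => (hderiv r).deriv) 1 0
    simpa using hc
  have h1 : f w = f ((w.re : ℂ)) := by
    have := line ((w.re : ℂ)) ((w.im : ℂ) * Complex.I)
    rw [← this]
    congr 1
    exact (Complex.re_add_im w).symm
  have h2 : f ((w.re : ℂ)) = f 0 := by
    have := line 0 ((w.re : ℂ))
    simpa using this
  have h3 : f 0 = ⟪q, a⟫ := by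
    simp only [hf, map_zero, F.W_zero]
  exact h1.trans (h2.trans h3)

lemma FreeData.W_adjoint {E₁ E₂ : ℝ} {u v : 𝓗} (hu : u ∈ F.V E₁) (hv : v ∈ F.V E₂)
    (z : ℂ) : ⟪F.W z u, v⟫ = ⟪u, F.W (-(starRingEnd ℂ z)) v⟫ := by
  have h := F.inner_W_W hu (F.W_mem (-(starRingEnd ℂ z)) E₂ v hv) (starRingEnd ℂ z)
  rwa [Complex.conj_conj, F.W_cancel E₂ hv (starRingEnd ℂ z)] at h

namespace C0

/-- swap the roles of `A` and `A*`. -/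
def flip (A : C0 F) : C0 F where
  op := A.adj
  adj := A.op
  dom := A.domAdj
  domAdj := A.dom
  dom_dense := A.domAdj_dense
  domAdj_dense := A.dom_dense
  isClosed := A.isClosedAdj
  isClosedAdj := A.isClosed
  adjoint_spec := by
    intro x hx y hy
    have h := A.adjoint_spec y hy x hx
    calc (inner ℂ (A.op y) x : ℂ) = starRingEnd ℂ (inner ℂ x (A.op y) : ℂ) := by
          rw [inner_conj_symm]
      _ = starRingEnd ℂ (inner ℂ (A.adj x) y : ℂ) := by rw [← h]
      _ = inner ℂ y (A.adj x) := by rw [inner_conj_symm]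
  Dfin_sub_dom := A.Dfin_sub_domAdj
  Dfin_sub_domAdj := A.Dfin_sub_dom
  C := A.C
  C_nonneg := A.C_nonneg
  norm_bound := A.norm_boundAdj
  norm_boundAdj := A.norm_bound
  b := A.b
  b_nonneg := A.b_nonneg
  map_V := A.map_VAdj
  map_VAdj := A.map_V

variable (A : C0 F)

@[simp] lemma flip_Az : A.flip.Az = A.AzStar := rfl
@[simp] lemma flip_Vn : A.flip.Vn = A.VnStar := rfl
@[simp] lemma flip_U : A.flip.U = A.Ustar := rfl
@[simp] lemma flip_C : A.flip.C = A.C := rfl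
@[simp] lemma flip_b : A.flip.b = A.b := rfl

lemma Az_apply (ζ : ℂ) (x : 𝓗) : A.Az ζ x = F.W ζ (A.op (F.W (-ζ) x)) := rfl

lemma Az_mem {E : ℝ} (hE : 0 ≤ E) (ζ : ℂ) {x : 𝓗} (hx : x ∈ F.V E) :
    A.Az ζ x ∈ F.V (E + A.b) :=
  F.W_mem _ _ _ (A.map_V E hE _ (F.W_mem _ _ _ hx))

lemma Az_adjoint {E₁ E₂ : ℝ} (hE₁ : 0 ≤ E₁) (hE₂ : 0 ≤ E₂) {u v : 𝓗}
    (hu : u ∈ F.V E₁) (hv : v ∈ F.V E₂) (ζ : ℂ) :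
    ⟪A.flip.Az (starRingEnd ℂ ζ) u, v⟫ = ⟪u, A.Az ζ v⟫ := by
  have h1 : F.W (-(starRingEnd ℂ ζ)) u ∈ F.V E₁ := F.W_mem _ _ _ hu
  have h2 : A.adj (F.W (-(starRingEnd ℂ ζ)) u) ∈ F.V (E₁ + A.b) :=
    A.map_VAdj E₁ hE₁ _ h1
  have h3 : F.W (-ζ) v ∈ F.V E₂ := F.W_mem _ _ _ hv
  calc ⟪A.flip.Az (starRingEnd ℂ ζ) u, v⟫
      = ⟪F.W (starRingEnd ℂ ζ) (A.adj (F.W (-(starRingEnd ℂ ζ)) u)), v⟫ := rfl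
    _ = ⟪A.adj (F.W (-(starRingEnd ℂ ζ)) u), F.W (-ζ) v⟫ := by
        rw [F.W_adjoint h2 hv, Complex.conj_conj]
    _ = ⟪F.W (-(starRingEnd ℂ ζ)) u, A.op (F.W (-ζ) v)⟫ :=
        A.adjoint_spec _ (A.Dfin_sub_dom (F.mem_Dfin hE₂ h3)) _
          (A.Dfin_sub_domAdj (F.mem_Dfin hE₁ h1))
    _ = ⟪u, F.W ζ (A.op (F.W (-ζ) v))⟫ := by
        have := F.W_adjoint hu (A.map_V E₂ hE₂ _ h3) (-(starRingEnd ℂ ζ))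
        rw [this]
        congr 2
        simp
    _ = ⟪u, A.Az ζ v⟫ := rfl

end C0

end AuxAdjoint
section AuxYray

variable {𝓗 : Type*} [NormedAddCommGroup 𝓗] [InnerProductSpace ℂ 𝓗] [CompleteSpace 𝓗]
variable {F : FreeData 𝓗}

namespace C0

/-- the iterated integrals `Vₙ(A; p + t d, p)` viewed along the ray `t ↦ p + t d`. -/
def Yray (A : C0 F) (p d : ℂ) (x : 𝓗) : ℕ → ℝ → 𝓗
  | 0 => fun _ => x
  | n + 1 => fun t =>
      (-Complex.I * d) • ∫ u in (0:ℝ)..t, A.Az (p + (u : ℂ) * d) (A.Yray p d x n u)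

variable (A : C0 F)

@[simp] lemma Yray_zero_fun (p d : ℂ) (x : 𝓗) (t : ℝ) : A.Yray p d x 0 t = x := rfl

lemma Yray_succ (p d : ℂ) (x : 𝓗) (n : ℕ) (t : ℝ) :
    A.Yray p d x (n + 1) t
      = (-Complex.I * d) • ∫ u in (0:ℝ)..t, A.Az (p + (u : ℂ) * d) (A.Yray p d x n u) := rfl

@[simp] lemma Yray_at_zero (p d : ℂ) (x : 𝓗) (n : ℕ) :
    A.Yray p d x (n + 1) 0 = 0 := by
  rw [Yray_succ, intervalIntegral.integral_same, smul_zero]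

lemma cont_Az_comp {E : ℝ} (hE : 0 ≤ E) {α : ℝ → ℂ} (hα : Continuous α)
    {f : ℝ → 𝓗} (hf : Continuous f) (hfS : ∀ t, f t ∈ F.V E) :
    Continuous fun t => A.Az (α t) (f t) := by
  have h1 : Continuous fun t => F.W (-(α t)) (f t) := F.cont_W_comp hE hα.neg hf hfS
  have h1S : ∀ t, F.W (-(α t)) (f t) ∈ F.V E := fun t => F.W_mem _ _ _ (hfS t)
  have h2 : Continuous fun t => A.op (F.W (-(α t)) (f t)) := by
    refine cont_comp_linear_on (c := A.C * Real.sqrt (E + 1)) ?_ h1 h1S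
    intro y hy
    simpa [mul_assoc] using A.norm_bound E hE y hy
  have h2S : ∀ t, A.op (F.W (-(α t)) (f t)) ∈ F.V (E + A.b) :=
    fun t => A.map_V E hE _ (h1S t)
  have h3 := F.cont_W_comp (E := E + A.b) (by linarith [A.b_nonneg]) hα h2 h2S
  exact h3

lemma Yray_mem_cont (p d : ℂ) {E : ℝ} (hE : 0 ≤ E) {x : 𝓗} (hx : x ∈ F.V E) :
    ∀ n : ℕ, (∀ t, A.Yray p d x n t ∈ F.V (E + n * A.b)) ∧ Continuous (A.Yray p d x n) := by
  intro n
  induction n with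
  | zero => exact ⟨fun t => by simpa using hx, continuous_const⟩
  | succ n ih =>
    obtain ⟨hmem, hcont⟩ := ih
    have hE' : 0 ≤ E + n * A.b :=
      add_nonneg hE (mul_nonneg (Nat.cast_nonneg n) A.b_nonneg)
    have hα : Continuous fun u : ℝ => p + (u : ℂ) * d :=
      continuous_const.add (Complex.continuous_ofReal.mul continuous_const)
    have hg : Continuous fun u : ℝ => A.Az (p + (u : ℂ) * d) (A.Yray p d x n u) :=
      A.cont_Az_comp hE' hα hcont hmem
    have hgS : ∀ u : ℝ, A.Az (p + (u : ℂ) * d) (A.Yray p d x n u) ∈ F.V (E + n * A.b + A.b) :=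
      fun u => A.Az_mem hE' _ (hmem u)
    have hcast : E + n * A.b + A.b = E + (n + 1 : ℕ) * A.b := by push_cast; ring
    constructor
    · intro t
      rw [Yray_succ, ← hcast]
      exact Submodule.smul_mem _ _ (intervalIntegral_mem (F.V_closed _) hg hgS 0 t)
    · have : Continuous fun t => ∫ u in (0:ℝ)..t, A.Az (p + (u : ℂ) * d) (A.Yray p d x n u) :=
        intervalIntegral.continuous_primitive (fun a b => hg.intervalIntegrable a b) 0
      exact this.const_smul _

lemma Yray_hasDerivAt (p d : ℂ) {E : ℝ} (hE : 0 ≤ E) {x : 𝓗} (hx : x ∈ F.V E)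
    (n : ℕ) (t : ℝ) :
    HasDerivAt (A.Yray p d x (n + 1))
      ((-Complex.I * d) • A.Az (p + (t : ℂ) * d) (A.Yray p d x n t)) t := by
  obtain ⟨hmem, hcont⟩ := A.Yray_mem_cont p d hE hx n
  have hE' : 0 ≤ E + n * A.b :=
    add_nonneg hE (mul_nonneg (Nat.cast_nonneg n) A.b_nonneg)
  have hα : Continuous fun u : ℝ => p + (u : ℂ) * d :=
    continuous_const.add (Complex.continuous_ofReal.mul continuous_const)
  have hg : Continuous fun u : ℝ => A.Az (p + (u : ℂ) * d) (A.Yray p d x n u) :=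
    A.cont_Az_comp hE' hα hcont hmem
  have := ((hg.integral_hasStrictDerivAt 0 t).hasDerivAt).const_smul (-Complex.I * d)
  exact this

lemma Yray_eq_Vn (p d : ℂ) (x : 𝓗) : ∀ (n : ℕ) (t : ℝ),
    A.Yray p d x n t = A.Vn n (p + (t : ℂ) * d) p x := by
  intro n
  induction n with
  | zero => intro t; rfl
  | succ n ih =>
    intro t
    have hV : A.Vn (n + 1) (p + (t : ℂ) * d) p x
        = (-Complex.I) • lineIntegral (fun ζ => A.Az ζ (A.Vn n ζ p x)) p (p + (t : ℂ) * d) := by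
      rw [Vn]
      rfl
    rw [Yray_succ, hV, lineIntegral]
    have hsub : p + (t : ℂ) * d - p = (t : ℂ) * d := by ring
    rw [hsub]
    have hint : (fun s : ℝ => A.Az (p + s • ((t : ℂ) * d)) (A.Vn n (p + s • ((t : ℂ) * d)) p x))
        = fun s : ℝ => A.Az (p + ((s * t : ℝ) : ℂ) * d) (A.Yray p d x n (s * t)) := by
      funext s
      have h1 : p + s • ((t : ℂ) * d) = p + ((s * t : ℝ) : ℂ) * d := by
        rw [Complex.real_smul]; push_cast; ring
      rw [h1, ih (s * t)]
    rw [hint]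
    have hscale : (t : ℝ) • (∫ s in (0:ℝ)..1,
          A.Az (p + ((s * t : ℝ) : ℂ) * d) (A.Yray p d x n (s * t)))
        = ∫ u in (0:ℝ)..t, A.Az (p + (u : ℂ) * d) (A.Yray p d x n u) := by
      have := intervalIntegral.smul_integral_comp_mul_right
        (f := fun u => A.Az (p + (u : ℂ) * d) (A.Yray p d x n u)) (c := t) (a := 0) (b := 1)
      simpa using this
    rw [← hscale]
    rw [smul_comm (-Complex.I * d : ℂ) (t : ℝ), mul_smul (-Complex.I) d,
      mul_smul ((t : ℂ)) d, Complex.coe_smul, smul_comm (-Complex.I : ℂ) (t : ℝ)]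
end C0

end AuxYray
section AuxNorm

variable {𝓗 : Type*} [NormedAddCommGroup 𝓗] [InnerProductSpace ℂ 𝓗] [CompleteSpace 𝓗]
variable {F : FreeData 𝓗}

namespace C0

lemma Yray_norm (A : C0 F) (p d : ℂ) {E : ℝ} (hE : 0 ≤ E) {x : 𝓗} (hx : x ∈ F.V E) :
    ∀ (n : ℕ) (t : ℝ), 0 ≤ t → t ≤ 1 →
      ‖F.W (-(p + (t : ℂ) * d)) (A.Yray p d x n t)‖ ≤
        ((∏ k ∈ Finset.range n, (‖d‖ * A.C * Real.sqrt (E + k * A.b + 1))) / n.factorial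
            * (Real.exp ((|p.im| + |d.im|) * E) * ‖x‖))
          * (t ^ n * Real.exp (t * |d.im| * (E + n * A.b))) := by
  set β := |d.im| with hβ
  set M := |p.im| + |d.im| with hM
  set c₀ := Real.exp (M * E) * ‖x‖ with hc₀
  set Kc : ℕ → ℝ := fun n =>
    (∏ k ∈ Finset.range n, (‖d‖ * A.C * Real.sqrt (E + k * A.b + 1))) / n.factorial * c₀
    with hKc
  have hβ0 : 0 ≤ β := abs_nonneg _
  have hc₀0 : 0 ≤ c₀ := mul_nonneg (Real.exp_pos _).le (norm_nonneg _)
  have hKc0 : ∀ n, 0 ≤ Kc n := by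
    intro n
    refine mul_nonneg (div_nonneg (Finset.prod_nonneg fun k _ => ?_) (Nat.cast_nonneg _)) hc₀0
    exact mul_nonneg (mul_nonneg (norm_nonneg _) A.C_nonneg) (Real.sqrt_nonneg _)
  have him : ∀ t : ℝ, 0 ≤ t → t ≤ 1 → |(-(p + (t : ℂ) * d)).im| ≤ M := by
    intro t ht0 ht1
    have : (-(p + (t : ℂ) * d)).im = -(p.im + t * d.im) := by
      simp [Complex.add_im, Complex.mul_im]
    rw [this, abs_neg]
    calc |p.im + t * d.im| ≤ |p.im| + |t * d.im| := abs_add_le _ _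
      _ ≤ |p.im| + |d.im| := by
          rw [abs_mul, _root_.abs_of_nonneg ht0]
          nlinarith [abs_nonneg d.im]
  intro n
  induction n with
  | zero =>
    intro t ht0 ht1
    have h1 : ‖F.W (-(p + (t : ℂ) * d)) x‖ ≤ Real.exp (M * E) * ‖x‖ := by
      calc ‖F.W (-(p + (t : ℂ) * d)) x‖
          ≤ Real.exp (|(-(p + (t : ℂ) * d)).im| * E) * ‖x‖ := F.W_norm _ E hE x hx
        _ ≤ Real.exp (M * E) * ‖x‖ := by
            have := Real.exp_le_exp.2 (mul_le_mul_of_nonneg_right (him t ht0 ht1) hE)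
            exact mul_le_mul_of_nonneg_right this (norm_nonneg _)
    have h2 : (1 : ℝ) ≤ t ^ 0 * Real.exp (t * β * (E + 0 * A.b)) := by
      simp only [pow_zero, one_mul]
      refine Real.one_le_exp ?_
      have h0 : E + 0 * A.b = E := by ring
      rw [h0]
      exact mul_nonneg (mul_nonneg ht0 hβ0) hE
    calc ‖F.W (-(p + (t : ℂ) * d)) (A.Yray p d x 0 t)‖ = ‖F.W (-(p + (t : ℂ) * d)) x‖ := rfl
      _ ≤ Kc 0 := by simpa [hKc, hc₀] using h1
      _ ≤ Kc 0 * (t ^ 0 * Real.exp (t * β * (E + 0 * A.b))) := le_mul_of_one_le_right (hKc0 0) h2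
      _ = Kc 0 * (t ^ 0 * Real.exp (t * β * (E + ((0:ℕ):ℝ) * A.b))) := by norm_num
  | succ n ih =>
    intro t ht0 ht1
    obtain ⟨hmem, hcont⟩ := A.Yray_mem_cont p d hE hx n
    have hbn : 0 ≤ (n : ℝ) * A.b := mul_nonneg (Nat.cast_nonneg n) A.b_nonneg
    have hE' : 0 ≤ E + n * A.b := add_nonneg hE hbn
    have hE'' : 0 ≤ E + n * A.b + A.b := add_nonneg hE' A.b_nonneg
    have hα : Continuous fun u : ℝ => p + (u : ℂ) * d :=
      continuous_const.add (Complex.continuous_ofReal.mul continuous_const)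
    have hg : Continuous fun u : ℝ => A.Az (p + (u : ℂ) * d) (A.Yray p d x n u) :=
      A.cont_Az_comp hE' hα hcont hmem
    have hgS : ∀ u : ℝ, A.Az (p + (u : ℂ) * d) (A.Yray p d x n u) ∈ F.V (E + n * A.b + A.b) :=
      fun u => A.Az_mem hE' _ (hmem u)
    -- commute W with the integral
    have hWbound : ∀ y ∈ F.V (E + n * A.b + A.b),
        ‖F.W (-(p + (t : ℂ) * d)) y‖
          ≤ Real.exp (|(-(p + (t : ℂ) * d)).im| * (E + n * A.b + A.b)) * ‖y‖ :=
      fun y hy => F.W_norm _ _ hE'' y hy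
    have hcomm : F.W (-(p + (t : ℂ) * d))
          (∫ u in (0:ℝ)..t, A.Az (p + (u : ℂ) * d) (A.Yray p d x n u))
        = ∫ u in (0:ℝ)..t, F.W (-(p + (t : ℂ) * d))
            (A.Az (p + (u : ℂ) * d) (A.Yray p d x n u)) :=
      map_intervalIntegral (F.V_closed _) _ hWbound hg hgS 0 t
    -- pointwise bound
    set Cst := Kc n * (A.C * Real.sqrt (E + n * A.b + 1)) * Real.exp (t * β * (E + (n + 1) * A.b))
      with hCst
    have hCst0 : 0 ≤ Cst := by
      refine mul_nonneg (mul_nonneg (hKc0 n) ?_) (Real.exp_pos _).le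
      exact mul_nonneg A.C_nonneg (Real.sqrt_nonneg _)
    have hpoint : ∀ u ∈ Set.Icc (0:ℝ) t,
        ‖F.W (-(p + (t : ℂ) * d)) (A.Az (p + (u : ℂ) * d) (A.Yray p d x n u))‖
          ≤ Cst * u ^ n := by
      intro u hu
      obtain ⟨hu0, hut⟩ := hu
      have hu1 : u ≤ 1 := hut.trans ht1
      set q := A.op (F.W (-(p + (u : ℂ) * d)) (A.Yray p d x n u)) with hq
      have hqmem : q ∈ F.V (E + n * A.b + A.b) :=
        A.map_V _ hE' _ (F.W_mem _ _ _ (hmem u))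
      have hrw : F.W (-(p + (t : ℂ) * d)) (A.Az (p + (u : ℂ) * d) (A.Yray p d x n u))
          = F.W (((u - t : ℝ) : ℂ) * d) q := by
        rw [C0.Az_apply]
        rw [F.W_add (-(p + (t : ℂ) * d)) (p + (u : ℂ) * d) _ q hqmem]
        congr 1
        push_cast
        ring
      have himu : |((((u - t : ℝ) : ℂ)) * d).im| = (t - u) * β := by
        have h : ((((u - t : ℝ) : ℂ)) * d).im = (u - t) * d.im := by
          simp [Complex.mul_im]
        rw [h, abs_mul, _root_.abs_of_nonpos (by linarith : u - t ≤ 0), hβ]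
        ring
      have h1 : ‖F.W (((u - t : ℝ) : ℂ) * d) q‖
          ≤ Real.exp ((t - u) * β * (E + n * A.b + A.b)) * ‖q‖ := by
        have := F.W_norm (((u - t : ℝ) : ℂ) * d) _ hE'' q hqmem
        rwa [himu] at this
      have h2 : ‖q‖ ≤ A.C * Real.sqrt (E + n * A.b + 1)
          * ‖F.W (-(p + (u : ℂ) * d)) (A.Yray p d x n u)‖ :=
        A.norm_bound _ hE' _ (F.W_mem _ _ _ (hmem u))
      have h3 := ih u hu0 hu1
      have h4 : ‖q‖ ≤ A.C * Real.sqrt (E + n * A.b + 1)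
          * (Kc n * (u ^ n * Real.exp (u * β * (E + n * A.b)))) := by
        refine h2.trans ?_
        exact mul_le_mul_of_nonneg_left h3
          (mul_nonneg A.C_nonneg (Real.sqrt_nonneg _))
      have hexp : Real.exp ((t - u) * β * (E + n * A.b + A.b))
            * Real.exp (u * β * (E + n * A.b))
          ≤ Real.exp (t * β * (E + (n + 1) * A.b)) := by
        rw [← Real.exp_add, Real.exp_le_exp]
        nlinarith [mul_nonneg (mul_nonneg hu0 hβ0) A.b_nonneg]
      calc ‖F.W (-(p + (t : ℂ) * d)) (A.Az (p + (u : ℂ) * d) (A.Yray p d x n u))‖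
          = ‖F.W (((u - t : ℝ) : ℂ) * d) q‖ := by rw [hrw]
        _ ≤ Real.exp ((t - u) * β * (E + n * A.b + A.b)) * ‖q‖ := h1
        _ ≤ Real.exp ((t - u) * β * (E + n * A.b + A.b))
              * (A.C * Real.sqrt (E + n * A.b + 1)
                * (Kc n * (u ^ n * Real.exp (u * β * (E + n * A.b))))) :=
            mul_le_mul_of_nonneg_left h4 (Real.exp_pos _).le
        _ = (Kc n * (A.C * Real.sqrt (E + n * A.b + 1)))
              * (Real.exp ((t - u) * β * (E + n * A.b + A.b))
                  * Real.exp (u * β * (E + n * A.b))) * u ^ n := by ring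
        _ ≤ (Kc n * (A.C * Real.sqrt (E + n * A.b + 1)))
              * Real.exp (t * β * (E + (n + 1) * A.b)) * u ^ n := by
            refine mul_le_mul_of_nonneg_right ?_ (pow_nonneg hu0 _)
            refine mul_le_mul_of_nonneg_left hexp ?_
            exact mul_nonneg (hKc0 n) (mul_nonneg A.C_nonneg (Real.sqrt_nonneg _))
        _ = Cst * u ^ n := by rw [hCst]
    -- integrate the bound
    have hintle : ‖∫ u in (0:ℝ)..t, F.W (-(p + (t : ℂ) * d))
          (A.Az (p + (u : ℂ) * d) (A.Yray p d x n u))‖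
        ≤ Cst * (t ^ (n + 1) / (n + 1)) := by
      have hWc : Continuous fun u : ℝ => F.W (-(p + (t : ℂ) * d))
          (A.Az (p + (u : ℂ) * d) (A.Yray p d x n u)) :=
        cont_comp_linear_on hWbound hg hgS
      calc ‖∫ u in (0:ℝ)..t, F.W (-(p + (t : ℂ) * d))
              (A.Az (p + (u : ℂ) * d) (A.Yray p d x n u))‖
          ≤ ∫ u in (0:ℝ)..t, ‖F.W (-(p + (t : ℂ) * d))
              (A.Az (p + (u : ℂ) * d) (A.Yray p d x n u))‖ :=
            intervalIntegral.norm_integral_le_integral_norm ht0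
        _ ≤ ∫ u in (0:ℝ)..t, Cst * u ^ n := by
            refine intervalIntegral.integral_mono_on ht0 ?_ ?_ ?_
            · exact hWc.norm.intervalIntegrable 0 t
            · exact (continuous_const.mul (continuous_pow n)).intervalIntegrable 0 t
            · exact hpoint
        _ = Cst * (t ^ (n + 1) / (n + 1)) := by
            rw [intervalIntegral.integral_const_mul, integral_pow]
            norm_num
    -- assemble
    have hfinal : ‖d‖ * (Cst * (t ^ (n + 1) / (n + 1)))
        = Kc (n + 1) * (t ^ (n + 1) * Real.exp (t * β * (E + (n + 1) * A.b))) := by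
      rw [hCst, hKc]
      simp only [Finset.prod_range_succ, Nat.factorial_succ, Nat.cast_mul, Nat.cast_add,
        Nat.cast_one]
      generalize (∏ k ∈ Finset.range n, (‖d‖ * A.C * Real.sqrt (E + k * A.b + 1))) = P
      have hne : ((n : ℝ) + 1) ≠ 0 := by positivity
      have hfac : ((n.factorial : ℝ)) ≠ 0 := by
        exact_mod_cast Nat.cast_ne_zero.2 n.factorial_ne_zero
      field_simp
    calc ‖F.W (-(p + (t : ℂ) * d)) (A.Yray p d x (n + 1) t)‖
        = ‖(-Complex.I * d) • ∫ u in (0:ℝ)..t, F.W (-(p + (t : ℂ) * d))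
            (A.Az (p + (u : ℂ) * d) (A.Yray p d x n u))‖ := by
          rw [C0.Yray_succ, LinearMap.map_smul, hcomm]
      _ = ‖d‖ * ‖∫ u in (0:ℝ)..t, F.W (-(p + (t : ℂ) * d))
            (A.Az (p + (u : ℂ) * d) (A.Yray p d x n u))‖ := by
          rw [norm_smul]
          congr 1
          simp
      _ ≤ ‖d‖ * (Cst * (t ^ (n + 1) / (n + 1))) :=
          mul_le_mul_of_nonneg_left hintle (norm_nonneg _)
      _ = Kc (n + 1) * (t ^ (n + 1) * Real.exp (t * β * (E + (n + 1) * A.b))) := hfinal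
      _ = Kc (n + 1) * (t ^ (n + 1) * Real.exp (t * β * (E + ((n : ℕ) + 1 : ℕ) * A.b))) := by
          push_cast
          ring_nf

end C0

end AuxNorm
section AuxSummable

variable {𝓗 : Type*} [NormedAddCommGroup 𝓗] [InnerProductSpace ℂ 𝓗] [CompleteSpace 𝓗]
variable {F : FreeData 𝓗}

lemma nat_pow_le_factorial : ∀ n : ℕ, ((n : ℝ) + 1) ^ n ≤ 4 ^ n * n.factorial := by
  intro n
  induction n with
  | zero => simp
  | succ n ih =>
    have hm : (0 : ℝ) < (n : ℝ) + 1 := by positivity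
    have key : (n : ℝ) + 2 ≤ Real.exp (1 / ((n : ℝ) + 1)) * ((n : ℝ) + 1) := by
      have h1 := Real.add_one_le_exp (1 / ((n : ℝ) + 1))
      have h2 : ((n : ℝ) + 1) * (1 / ((n : ℝ) + 1) + 1) ≤ ((n : ℝ) + 1) * Real.exp (1 / ((n : ℝ) + 1)) :=
        mul_le_mul_of_nonneg_left h1 hm.le
      have h3 : ((n : ℝ) + 1) * (1 / ((n : ℝ) + 1) + 1) = (n : ℝ) + 2 := by
        field_simp
        ring
      nlinarith [h2, h3]
    have hexp1 : Real.exp (1 / ((n : ℝ) + 1)) ^ (n + 1) = Real.exp 1 := by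
      rw [← Real.exp_nat_mul]
      congr 1
      push_cast
      field_simp
    calc ((↑(n + 1) : ℝ) + 1) ^ (n + 1) = ((n : ℝ) + 2) ^ (n + 1) := by push_cast; ring_nf
      _ ≤ (Real.exp (1 / ((n : ℝ) + 1)) * ((n : ℝ) + 1)) ^ (n + 1) :=
          pow_le_pow_left₀ (by positivity) key _
      _ = Real.exp 1 * (((n : ℝ) + 1) ^ (n + 1)) := by rw [mul_pow, hexp1]
      _ ≤ 4 * (((n : ℝ) + 1) ^ (n + 1)) := by
          have h4 : Real.exp 1 ≤ 4 := by
            have := Real.exp_one_lt_d9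
            linarith
          exact mul_le_mul_of_nonneg_right h4 (by positivity)
      _ = ((n : ℝ) + 1) * (((n : ℝ) + 1) ^ n) * 4 := by ring
      _ ≤ ((n : ℝ) + 1) * (4 ^ n * n.factorial) * 4 := by
          refine mul_le_mul_of_nonneg_right (mul_le_mul_of_nonneg_left ih (by positivity)) (by norm_num)
      _ = 4 ^ (n + 1) * ((n + 1).factorial : ℝ) := by
          rw [Nat.factorial_succ]
          push_cast
          ring

lemma sqrt_pow_le_factorial (n : ℕ) :
    Real.sqrt ((n : ℝ) + 1) ^ n ≤ 2 ^ n * Real.sqrt n.factorial := by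
  calc Real.sqrt ((n : ℝ) + 1) ^ n
      = Real.sqrt ((Real.sqrt ((n : ℝ) + 1) ^ n) ^ 2) :=
        (Real.sqrt_sq (pow_nonneg (Real.sqrt_nonneg _) _)).symm
    _ = Real.sqrt (((n : ℝ) + 1) ^ n) := by
        rw [← pow_mul, mul_comm n 2, pow_mul, Real.sq_sqrt (by positivity)]
    _ ≤ Real.sqrt (4 ^ n * n.factorial) := Real.sqrt_le_sqrt (nat_pow_le_factorial n)
    _ = 2 ^ n * Real.sqrt n.factorial := by
        rw [Real.sqrt_mul (by positivity),
          show ((4 : ℝ) ^ n) = ((2 : ℝ) ^ n) ^ 2 by rw [← pow_mul, mul_comm n 2, pow_mul]; norm_num,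
          Real.sqrt_sq (by positivity)]

namespace C0

lemma norm_Vn_le (A : C0 F) {E : ℝ} (hE : 0 ≤ E) {x : 𝓗} (hx : x ∈ F.V E) (z z' : ℂ)
    (n : ℕ) :
    ‖A.Vn n z z' x‖ ≤
      Real.exp ((|z'.im| + |(z - z').im|) * (E + n * A.b))
        * (((∏ k ∈ Finset.range n, (‖z - z'‖ * A.C * Real.sqrt (E + k * A.b + 1)))
              / n.factorial
            * (Real.exp ((|z'.im| + |(z - z').im|) * E) * ‖x‖))
          * Real.exp (|(z - z').im| * (E + n * A.b))) := by
  set p := z' with hp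
  set d := z - z' with hd
  have h1 : A.Vn n z z' x = A.Yray p d x n 1 := by
    rw [A.Yray_eq_Vn p d x n 1]
    congr 1
    push_cast
    ring
  obtain ⟨hmem, _⟩ := A.Yray_mem_cont p d hE hx n
  have hE' : 0 ≤ E + n * A.b := add_nonneg hE (mul_nonneg (Nat.cast_nonneg n) A.b_nonneg)
  have h2 : A.Yray p d x n 1 = F.W (p + ((1:ℝ):ℂ) * d) (F.W (-(p + ((1:ℝ):ℂ) * d)) (A.Yray p d x n 1)) :=
    (F.W_cancel _ (hmem 1) _).symm
  have him : |(p + ((1:ℝ):ℂ) * d).im| ≤ |p.im| + |d.im| := by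
    have : (p + ((1:ℝ):ℂ) * d).im = p.im + d.im := by simp [Complex.add_im, Complex.mul_im]
    rw [this]
    exact abs_add_le _ _
  have h3 : ‖F.W (p + ((1:ℝ):ℂ) * d) (F.W (-(p + ((1:ℝ):ℂ) * d)) (A.Yray p d x n 1))‖
      ≤ Real.exp ((|p.im| + |d.im|) * (E + n * A.b))
        * ‖F.W (-(p + ((1:ℝ):ℂ) * d)) (A.Yray p d x n 1)‖ := by
    refine (F.W_norm _ _ hE' _ (F.W_mem _ _ _ (hmem 1))).trans ?_
    refine mul_le_mul_of_nonneg_right (Real.exp_le_exp.2 ?_) (norm_nonneg _)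
    exact mul_le_mul_of_nonneg_right him hE'
  have h4 := A.Yray_norm p d hE hx n 1 zero_le_one le_rfl
  rw [one_pow, one_mul, one_mul] at h4
  rw [h1, h2]
  refine h3.trans ?_
  refine mul_le_mul_of_nonneg_left ?_ (Real.exp_pos _).le
  refine h4.trans (le_of_eq ?_)
  ring

lemma summable_Vn (A : C0 F) {E : ℝ} (hE : 0 ≤ E) {x : 𝓗} (hx : x ∈ F.V E) (z z' : ℂ) :
    Summable fun n => A.Vn n z z' x := by
  set d := z - z' with hd
  set M := |z'.im| + |d.im| with hM
  set β := |d.im| with hβ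
  set D := E + A.b + 1 with hD
  set R := Real.exp ((M + β) * A.b) * (‖d‖ * A.C * Real.sqrt D) with hR
  set c₁ := Real.exp ((M + β) * E) * (Real.exp (M * E) * ‖x‖) with hc₁
  have hβ0 : 0 ≤ β := abs_nonneg _
  have hM0 : 0 ≤ M := add_nonneg (abs_nonneg _) hβ0
  have hD0 : 0 < D := by
    have := A.b_nonneg
    simp only [hD]
    linarith
  have hR0 : 0 ≤ R := by
    refine mul_nonneg (Real.exp_pos _).le ?_
    exact mul_nonneg (mul_nonneg (norm_nonneg _) A.C_nonneg) (Real.sqrt_nonneg _)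
  have hc₁0 : 0 ≤ c₁ :=
    mul_nonneg (Real.exp_pos _).le (mul_nonneg (Real.exp_pos _).le (norm_nonneg _))
  -- step 1 : clean bound
  have key : ∀ n : ℕ, ‖A.Vn n z z' x‖ ≤ c₁ * (R ^ n * Real.sqrt ((n:ℝ)+1) ^ n / n.factorial) := by
    intro n
    refine (A.norm_Vn_le hE hx z z' n).trans ?_
    have hfac : (0:ℝ) < n.factorial := by exact_mod_cast n.factorial_pos
    -- bound the product
    have hprod : (∏ k ∈ Finset.range n, (‖d‖ * A.C * Real.sqrt (E + k * A.b + 1)))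
        ≤ (‖d‖ * A.C * (Real.sqrt D * Real.sqrt ((n:ℝ)+1))) ^ n := by
      have hle : ∀ k ∈ Finset.range n, ‖d‖ * A.C * Real.sqrt (E + k * A.b + 1)
          ≤ ‖d‖ * A.C * (Real.sqrt D * Real.sqrt ((n:ℝ)+1)) := by
        intro k hk
        have hkn : (k : ℝ) ≤ n := by
          exact_mod_cast (Finset.mem_range.1 hk).le
        refine mul_le_mul_of_nonneg_left ?_ (mul_nonneg (norm_nonneg _) A.C_nonneg)
        rw [← Real.sqrt_mul hD0.le]
        refine Real.sqrt_le_sqrt ?_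
        have hb := A.b_nonneg
        rw [hD]
        nlinarith [mul_le_mul_of_nonneg_right hkn hb, mul_nonneg hE (Nat.cast_nonneg n),
          mul_nonneg hb (Nat.cast_nonneg n), Nat.cast_nonneg (α := ℝ) n]
      calc (∏ k ∈ Finset.range n, (‖d‖ * A.C * Real.sqrt (E + k * A.b + 1)))
          ≤ ∏ k ∈ Finset.range n, (‖d‖ * A.C * (Real.sqrt D * Real.sqrt ((n:ℝ)+1))) := by
            refine Finset.prod_le_prod (fun k _ => ?_) hle
            exact mul_nonneg (mul_nonneg (norm_nonneg _) A.C_nonneg) (Real.sqrt_nonneg _)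
        _ = (‖d‖ * A.C * (Real.sqrt D * Real.sqrt ((n:ℝ)+1))) ^ n := by
            rw [Finset.prod_const, Finset.card_range]
    have hexp : Real.exp (M * (E + n * A.b)) * Real.exp (β * (E + n * A.b))
        = Real.exp ((M + β) * E) * Real.exp ((M + β) * A.b) ^ n := by
      rw [← Real.exp_add, ← Real.exp_nat_mul, ← Real.exp_add]
      congr 1
      ring
    -- assemble
    have hprodn : (0:ℝ) ≤ (‖d‖ * A.C * (Real.sqrt D * Real.sqrt ((n:ℝ)+1))) ^ n :=
      pow_nonneg (mul_nonneg (mul_nonneg (norm_nonneg _) A.C_nonneg)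
        (mul_nonneg (Real.sqrt_nonneg _) (Real.sqrt_nonneg _))) _
    calc Real.exp (M * (E + n * A.b))
          * (((∏ k ∈ Finset.range n, (‖d‖ * A.C * Real.sqrt (E + k * A.b + 1))) / n.factorial
              * (Real.exp (M * E) * ‖x‖))
            * Real.exp (β * (E + n * A.b)))
        ≤ Real.exp (M * (E + n * A.b))
          * ((((‖d‖ * A.C * (Real.sqrt D * Real.sqrt ((n:ℝ)+1))) ^ n) / n.factorial
              * (Real.exp (M * E) * ‖x‖))
            * Real.exp (β * (E + n * A.b))) := by
          refine mul_le_mul_of_nonneg_left ?_ (Real.exp_pos _).le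
          refine mul_le_mul_of_nonneg_right ?_ (Real.exp_pos _).le
          refine mul_le_mul_of_nonneg_right ?_ (mul_nonneg (Real.exp_pos _).le (norm_nonneg _))
          gcongr
      _ = c₁ * ((Real.exp ((M + β) * A.b) ^ n * (‖d‖ * A.C * (Real.sqrt D * Real.sqrt ((n:ℝ)+1))) ^ n)
            / n.factorial) := by
          linear_combination (((‖d‖ * A.C * (Real.sqrt D * Real.sqrt ((n:ℝ)+1))) ^ n
            / (n.factorial : ℝ)) * (Real.exp (M * E) * ‖x‖)) * hexp
      _ = c₁ * ((R ^ n * Real.sqrt ((n:ℝ)+1) ^ n) / n.factorial) := by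
          congr 2
          rw [hR]
          rw [mul_pow, mul_pow, mul_pow, mul_pow]
          ring
      _ = c₁ * (R ^ n * Real.sqrt ((n:ℝ)+1) ^ n / n.factorial) := rfl
  -- step 2 : compare with summable series
  have key2 : ∀ n : ℕ, ‖A.Vn n z z' x‖
      ≤ c₁ * ((16 * R ^ 2) ^ n / n.factorial) + c₁ * (1/4) ^ n := by
    intro n
    refine (key n).trans ?_
    have hfac : (0:ℝ) < n.factorial := by exact_mod_cast n.factorial_pos
    have hsq : Real.sqrt ((n:ℝ)+1) ^ n ≤ 2 ^ n * Real.sqrt n.factorial :=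
      sqrt_pow_le_factorial n
    have h1 : R ^ n * Real.sqrt ((n:ℝ)+1) ^ n / n.factorial
        ≤ R ^ n * (2 ^ n * Real.sqrt n.factorial) / n.factorial := by
      gcongr
    have hsf : Real.sqrt (n.factorial : ℝ) * Real.sqrt (n.factorial : ℝ) = n.factorial :=
      Real.mul_self_sqrt (by positivity)
    have hsf0 : (0:ℝ) < Real.sqrt n.factorial := by
      rw [Real.sqrt_pos]
      exact hfac
    have hsqdiv : Real.sqrt (n.factorial:ℝ) / (n.factorial:ℝ)
        = 1 / Real.sqrt (n.factorial:ℝ) := by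
      rw [div_eq_div_iff hfac.ne' hsf0.ne', one_mul, hsf]
    have h2 : R ^ n * (2 ^ n * Real.sqrt n.factorial) / n.factorial
        = (2 * R) ^ n / Real.sqrt n.factorial := by
      rw [show R ^ n * (2 ^ n * Real.sqrt (n.factorial:ℝ)) / (n.factorial:ℝ)
          = (2 ^ n * R ^ n) * (Real.sqrt (n.factorial:ℝ) / (n.factorial:ℝ)) from by ring,
        hsqdiv, mul_pow]
      ring
    have h3 : (2 * R) ^ n / Real.sqrt n.factorial
        ≤ (16 * R ^ 2) ^ n / n.factorial + (1/4) ^ n := by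
      have hab : (2 * R) ^ n / Real.sqrt n.factorial
          = ((4 * R) ^ n / Real.sqrt n.factorial) * (1/2) ^ n := by
        rw [div_mul_eq_mul_div, ← mul_pow]
        congr 2
        ring
      have h2ab := two_mul_le_add_sq ((4 * R) ^ n / Real.sqrt n.factorial) ((1/2) ^ n)
      have hab0 : 0 ≤ ((4 * R) ^ n / Real.sqrt n.factorial) * (1/2) ^ n := by positivity
      have hsq1 : ((4 * R) ^ n / Real.sqrt n.factorial) ^ 2 = (16 * R ^ 2) ^ n / n.factorial := by
        rw [div_pow, Real.sq_sqrt (by positivity : (0:ℝ) ≤ (n.factorial : ℝ))]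
        congr 1
        rw [← pow_mul, mul_comm n 2, pow_mul]
        congr 1
        ring
      have hsq2 : ((1/2 : ℝ) ^ n) ^ 2 = (1/4) ^ n := by
        rw [← pow_mul, mul_comm n 2, pow_mul]
        norm_num
      rw [hab]
      nlinarith [h2ab, hab0, hsq1, hsq2]
    calc c₁ * (R ^ n * Real.sqrt ((n:ℝ)+1) ^ n / n.factorial)
        ≤ c₁ * ((16 * R ^ 2) ^ n / n.factorial + (1/4) ^ n) := by
          refine mul_le_mul_of_nonneg_left ((h1.trans_eq h2).trans h3) hc₁0
      _ = c₁ * ((16 * R ^ 2) ^ n / n.factorial) + c₁ * (1/4) ^ n := by ring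
  refine Summable.of_norm ?_
  refine Summable.of_nonneg_of_le (fun n => norm_nonneg _) key2 ?_
  refine Summable.add ?_ ?_
  · exact (Real.summable_pow_div_factorial (16 * R ^ 2)).mul_left c₁
  · exact (summable_geometric_of_lt_one (by norm_num) (by norm_num)).mul_left c₁

end C0

end AuxSummable
section AuxPairing

variable {𝓗 : Type*} [NormedAddCommGroup 𝓗] [InnerProductSpace ℂ 𝓗] [CompleteSpace 𝓗]
variable {F : FreeData 𝓗}

local notation "⟪" x ", " y "⟫" => (inner ℂ x y : ℂ)

namespace C0

lemma Vn_pairing (A : C0 F) {E₁ E₂ : ℝ} (hE₁ : 0 ≤ E₁) (hE₂ : 0 ≤ E₂)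
    {u v : 𝓗} (hu : u ∈ F.V E₁) (hv : v ∈ F.V E₂) (z z' : ℂ) (n : ℕ) :
    ⟪A.flip.Vn n (starRingEnd ℂ z') (starRingEnd ℂ z) u, v⟫ = ⟪u, A.Vn n z z' v⟫ := by
  set p : ℂ := z' with hp
  set d : ℂ := z - z' with hd
  set ps : ℂ := starRingEnd ℂ z with hps
  set ds : ℂ := starRingEnd ℂ z' - starRingEnd ℂ z with hds
  set Y : ℕ → ℝ → 𝓗 := A.Yray p d v with hY
  set Ys : ℕ → ℝ → 𝓗 := A.flip.Yray ps ds u with hYs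
  have hYmem : ∀ (m : ℕ) (t : ℝ), Y m t ∈ F.V (E₂ + m * A.b) :=
    fun m => (A.Yray_mem_cont p d hE₂ hv m).1
  have hYsmem : ∀ (m : ℕ) (t : ℝ), Ys m t ∈ F.V (E₁ + m * A.b) :=
    fun m => (A.flip.Yray_mem_cont ps ds hE₁ hu m).1
  have hpath : ∀ t : ℝ, ps + ((1 - t : ℝ) : ℂ) * ds = starRingEnd ℂ (p + (t : ℂ) * d) := by
    intro t
    rw [hps, hds, hp, hd]
    simp only [map_add, map_mul, map_sub, Complex.conj_ofReal]
    push_cast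
    ring
  set c : ℂ := -Complex.I * d with hc
  have hG : ∀ t : ℝ,
      HasDerivAt (fun s => ∑ k ∈ Finset.range (n + 1), ⟪Ys k (1 - s), Y (n - k) s⟫)
        (0 : ℂ) t := by
    intro t
    set T : ℕ → ℂ := fun j => c * ⟪Ys j (1 - t), A.Az (p + (t : ℂ) * d) (Y (n - 1 - j) t)⟫
      with hT
    have hAzAdj : ∀ j m : ℕ,
        ⟪A.flip.Az (starRingEnd ℂ (p + (t : ℂ) * d)) (Ys j (1 - t)), Y m t⟫
          = ⟪Ys j (1 - t), A.Az (p + (t : ℂ) * d) (Y m t)⟫ := by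
      intro j m
      exact A.Az_adjoint
        (add_nonneg hE₁ (mul_nonneg (Nat.cast_nonneg j) A.b_nonneg))
        (add_nonneg hE₂ (mul_nonneg (Nat.cast_nonneg m) A.b_nonneg))
        (hYsmem j (1 - t)) (hYmem m t) _
    have hcconj : starRingEnd ℂ (-Complex.I * ds) = c := by
      rw [hds, hc, hd]
      simp only [map_mul, map_sub, map_neg, Complex.conj_I, Complex.conj_conj]
      ring
    have hone : HasDerivAt (fun s : ℝ => 1 - s) (-1 : ℝ) t := by
      simpa using (hasDerivAt_id t).const_sub 1
    have hsecond : ∀ j m : ℕ,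
        ⟪(-1 : ℝ) • ((-Complex.I * ds) •
            A.flip.Az (ps + ((1 - t : ℝ) : ℂ) * ds) (Ys j (1 - t))), Y m t⟫
          = -(c * ⟪Ys j (1 - t), A.Az (p + (t : ℂ) * d) (Y m t)⟫) := by
      intro j m
      rw [hpath t, neg_one_smul ℝ, inner_neg_left, inner_smul_left, hAzAdj j m, hcconj]
    have hterm : ∀ k ∈ Finset.range (n + 1),
        HasDerivAt (fun s => ⟪Ys k (1 - s), Y (n - k) s⟫)
          ((if k < n then T k else 0) - (if 0 < k then T (k - 1) else 0)) t := by
      intro k hk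
      have hkn : k ≤ n := Nat.lt_succ_iff.1 (Finset.mem_range.1 hk)
      rcases k with _ | j
      · -- k = 0 : first slot constant
        rcases Nat.eq_zero_or_pos n with hn | hn
        · subst hn
          have hfun : (fun s : ℝ => ⟪Ys 0 (1 - s), Y (0 - 0) s⟫) = fun _ => ⟪u, v⟫ := rfl
          rw [hfun]
          simpa using hasDerivAt_const t (⟪u, v⟫)
        · -- 0 < n
          obtain ⟨m, hm⟩ := Nat.exists_eq_succ_of_ne_zero (Nat.pos_iff_ne_zero.1 hn)
          have hnk : n - 0 = m + 1 := by omega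
          have hY' : HasDerivAt (Y (m + 1))
              ((-Complex.I * d) • A.Az (p + (t : ℂ) * d) (Y m t)) t :=
            A.Yray_hasDerivAt p d hE₂ hv m t
          have h := HasDerivAt.inner ℂ (hasDerivAt_const t u) hY'
          simp only [inner_zero_left, add_zero] at h
          have hval : ⟪u, (-Complex.I * d) • A.Az (p + (t : ℂ) * d) (Y m t)⟫
              = (if 0 < n then T 0 else 0) - (if 0 < 0 then T (0 - 1) else 0) := by
            rw [if_pos hn, if_neg (lt_irrefl 0), sub_zero]
            simp only [hT]
            rw [inner_smul_right]
            have hidx : n - 1 - 0 = m := by omega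
            rw [hidx, hc]
            rfl
          rw [hnk]
          rw [← hval]
          exact h
      · -- k = j + 1 : first slot differentiable
        have hYs' : HasDerivAt (Ys (j + 1))
            ((-Complex.I * ds) • A.flip.Az (ps + ((1 - t : ℝ) : ℂ) * ds) (Ys j (1 - t)))
            (1 - t) := A.flip.Yray_hasDerivAt ps ds hE₁ hu j (1 - t)
        have hfirst : HasDerivAt (fun s : ℝ => Ys (j + 1) (1 - s))
            ((-1 : ℝ) • ((-Complex.I * ds) •
              A.flip.Az (ps + ((1 - t : ℝ) : ℂ) * ds) (Ys j (1 - t)))) t :=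
          HasDerivAt.scomp t hYs' hone
        rcases lt_or_eq_of_le hkn with hlt | heq
        · -- j + 1 < n : both slots move
          have hm : n - (j + 1) = (n - 1 - (j + 1)) + 1 := by omega
          set m : ℕ := n - 1 - (j + 1) with hmdef
          have hY' : HasDerivAt (Y (m + 1))
              ((-Complex.I * d) • A.Az (p + (t : ℂ) * d) (Y m t)) t :=
            A.Yray_hasDerivAt p d hE₂ hv m t
          have h := HasDerivAt.inner ℂ hfirst hY'
          have hval : ⟪Ys (j + 1) (1 - t), (-Complex.I * d) • A.Az (p + (t : ℂ) * d) (Y m t)⟫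
              + ⟪(-1 : ℝ) • ((-Complex.I * ds) •
                  A.flip.Az (ps + ((1 - t : ℝ) : ℂ) * ds) (Ys j (1 - t))), Y (m + 1) t⟫
              = (if j + 1 < n then T (j + 1) else 0)
                - (if 0 < j + 1 then T (j + 1 - 1) else 0) := by
            rw [if_pos hlt, if_pos (Nat.succ_pos j)]
            rw [hsecond j (m + 1), inner_smul_right]
            simp only [hT, Nat.add_sub_cancel]
            have h2 : n - 1 - j = m + 1 := by omega
            have h3 : n - 1 - (j + 1) = m := by omega
            rw [h2, h3, hc]
            ring
          rw [hm, ← hval]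
          exact h
        · -- j + 1 = n : second slot constant
          have hnk : n - (j + 1) = 0 := by omega
          have h := HasDerivAt.inner ℂ hfirst (hasDerivAt_const t (Y 0 t))
          simp only [inner_zero_right, zero_add] at h
          have hval : ⟪(-1 : ℝ) • ((-Complex.I * ds) •
                A.flip.Az (ps + ((1 - t : ℝ) : ℂ) * ds) (Ys j (1 - t))), Y 0 t⟫
              = (if j + 1 < n then T (j + 1) else 0)
                - (if 0 < j + 1 then T (j + 1 - 1) else 0) := by
            rw [if_neg (by omega), if_pos (Nat.succ_pos j), zero_sub]
            rw [hsecond j 0]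
            simp only [hT, Nat.add_sub_cancel]
            have h2 : n - 1 - j = 0 := by omega
            rw [h2]
          rw [hnk, ← hval]
          exact h
    have hsum := HasDerivAt.fun_sum hterm
    have hzero : ∑ k ∈ Finset.range (n + 1),
        ((if k < n then T k else 0) - (if 0 < k then T (k - 1) else 0)) = 0 := by
      rw [Finset.sum_sub_distrib]
      have h1 : ∑ k ∈ Finset.range (n + 1), (if k < n then T k else 0)
          = ∑ k ∈ Finset.range n, T k := by
        rw [Finset.sum_range_succ, if_neg (lt_irrefl n), add_zero]
        exact Finset.sum_congr rfl fun k hk => if_pos (Finset.mem_range.1 hk)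
      have h2 : ∑ k ∈ Finset.range (n + 1), (if 0 < k then T (k - 1) else 0)
          = ∑ k ∈ Finset.range n, T k := by
        rw [Finset.sum_range_succ']
        simp only [Nat.succ_sub_one, Nat.succ_pos, if_true, lt_irrefl, if_neg, add_zero]
        simp
      rw [h1, h2, sub_self]
    rwa [hzero] at hsum
  -- constancy
  have hconst := is_const_of_deriv_eq_zero
    (fun t => (hG t).differentiableAt) (fun t => (hG t).deriv) 1 0
  -- endpoints
  have hG1 : ∑ k ∈ Finset.range (n + 1), ⟪Ys k (1 - (1:ℝ)), Y (n - k) 1⟫ = ⟪u, Y n 1⟫ := by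
    rw [Finset.sum_eq_single 0]
    · norm_num
      rfl
    · intro k hk hk0
      obtain ⟨j, hj⟩ := Nat.exists_eq_succ_of_ne_zero hk0
      subst hj
      have hzz : Ys (j + 1) (1 - (1:ℝ)) = 0 := by
        have h0 : (1:ℝ) - 1 = 0 := by norm_num
        rw [h0]
        exact A.flip.Yray_at_zero ps ds u j
      rw [hzz, inner_zero_left]
    · intro h
      exact absurd (Finset.mem_range.2 (Nat.succ_pos n)) h
  have hG0 : ∑ k ∈ Finset.range (n + 1), ⟪Ys k (1 - (0:ℝ)), Y (n - k) 0⟫ = ⟪Ys n 1, v⟫ := by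
    rw [Finset.sum_eq_single n]
    · norm_num
      rfl
    · intro k hk hkn
      have hlt : k < n := lt_of_le_of_ne (Nat.lt_succ_iff.1 (Finset.mem_range.1 hk)) hkn
      obtain ⟨j, hj⟩ := Nat.exists_eq_succ_of_ne_zero (Nat.sub_ne_zero_of_lt hlt)
      rw [hj]
      have hzz : Y (j + 1) 0 = 0 := A.Yray_at_zero p d v j
      rw [hzz, inner_zero_right]
    · intro h
      exact absurd (Finset.mem_range.2 (Nat.lt_succ_self n)) h
  have hends : (⟪Ys n 1, v⟫ : ℂ) = ⟪u, Y n 1⟫ := by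
    rw [← hG0, ← hG1]
    exact hconst.symm
  -- identify endpoints with Vn
  have hYs1 : Ys n 1 = A.flip.Vn n (starRingEnd ℂ z') (starRingEnd ℂ z) u := by
    rw [hYs, A.flip.Yray_eq_Vn ps ds u n 1]
    congr 1
    rw [hps, hds]
    push_cast
    ring
  have hY1 : Y n 1 = A.Vn n z z' v := by
    rw [hY, A.Yray_eq_Vn p d v n 1]
    congr 1
    rw [hp, hd]
    push_cast
    ring
  rw [← hYs1, ← hY1]
  exact hends

end C0

end AuxPairing
section AuxMain

variable {𝓗 : Type*} [NormedAddCommGroup 𝓗] [InnerProductSpace ℂ 𝓗] [CompleteSpace 𝓗]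
variable {F : FreeData 𝓗}

local notation "⟪" x ", " y "⟫" => (inner ℂ x y : ℂ)

namespace C0

lemma inner_tsum_right {f : ℕ → 𝓗} (hf : Summable f) (u : 𝓗) :
    ⟪u, ∑' n, f n⟫ = ∑' n, ⟪u, f n⟫ := by
  have h := ContinuousLinearMap.map_tsum (innerSL ℂ u) hf
  simpa only [innerSL_apply_apply] using h

lemma inner_tsum_left {f : ℕ → 𝓗} (hf : Summable f) (v : 𝓗) :
    ⟪∑' n, f n, v⟫ = ∑' n, ⟪f n, v⟫ := by
  calc ⟪∑' n, f n, v⟫ = starRingEnd ℂ ⟪v, ∑' n, f n⟫ := (inner_conj_symm _ _).symm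
    _ = starRingEnd ℂ (∑' n, ⟪v, f n⟫) := by
        rw [inner_tsum_right hf v]
    _ = ∑' n, starRingEnd ℂ ⟪v, f n⟫ := by
        rw [starRingEnd_apply, tsum_star]
        rfl
    _ = ∑' n, ⟪f n, v⟫ := by
        simp only [inner_conj_symm]

lemma U_pairing (A : C0 F) (z z' : ℂ) {u v : 𝓗} (hu : u ∈ F.Dfin) (hv : v ∈ F.Dfin) :
    ⟪A.Ustar (starRingEnd ℂ z') (starRingEnd ℂ z) u, v⟫ = ⟪u, A.U z z' v⟫ := by
  simp only [FreeData.Dfin, Set.mem_iUnion, Set.mem_Ici, exists_prop, SetLike.mem_coe] at hu hv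
  obtain ⟨E₁, hE₁, hu⟩ := hu
  obtain ⟨E₂, hE₂, hv⟩ := hv
  have hsum1 : Summable fun n => A.flip.Vn n (starRingEnd ℂ z') (starRingEnd ℂ z) u :=
    A.flip.summable_Vn hE₁ hu _ _
  have hsum2 : Summable fun n => A.Vn n z z' v := A.summable_Vn hE₂ hv z z'
  have hU : A.Ustar (starRingEnd ℂ z') (starRingEnd ℂ z) u
      = ∑' n, A.flip.Vn n (starRingEnd ℂ z') (starRingEnd ℂ z) u := rfl
  have hU' : A.U z z' v = ∑' n, A.Vn n z z' v := rfl
  rw [hU, hU', inner_tsum_left hsum1 v, inner_tsum_right hsum2 u]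
  refine tsum_congr fun n => ?_
  simpa using A.Vn_pairing hE₁ hE₂ hu hv z z' n

end C0

end AuxMain
/-- Let `A` be of `C₀`-class and `z, z' ∈ ℂ` with `Im z' ≤ Im z`.  The
operator `U(A;z,z')` defined on `D_fin` is closable (the closure of its graph is the graph
of a map), and its adjoint extends the closure of `U(A*; z'*, z*)`: whenever `(y, w)`
belongs to the closure of the graph of `U(A*; conj z', conj z) ↾ D_fin`, one has
`⟪y, U(A;z,z') x⟫ = ⟪w, x⟫` for all `x ∈ D_fin`, i.e. `y ∈ D(U(A;z,z')*)` and
`U(A;z,z')* y = w`. -/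
theorem statement1 {𝓗 : Type*} [NormedAddCommGroup 𝓗] [InnerProductSpace ℂ 𝓗]
    [CompleteSpace 𝓗] (F : FreeData 𝓗) (A : C0 F) (z z' : ℂ) (him : z'.im ≤ z.im) :
    (∀ x y₁ y₂ : 𝓗, (x, y₁) ∈ graphClos F.Dfin (A.U z z') →
      (x, y₂) ∈ graphClos F.Dfin (A.U z z') → y₁ = y₂) ∧
    (∀ y w : 𝓗,
      (y, w) ∈ graphClos F.Dfin (A.Ustar (starRingEnd ℂ z') (starRingEnd ℂ z)) →
      ∀ x ∈ F.Dfin, (inner ℂ y (A.U z z' x) : ℂ) = inner ℂ w x) := by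
  have key : ∀ u' ∈ F.Dfin, ∀ x ∈ F.Dfin,
      (inner ℂ (A.Ustar (starRingEnd ℂ z') (starRingEnd ℂ z) u') x : ℂ)
        = inner ℂ u' (A.U z z' x) :=
    fun u' hu' x hx => A.U_pairing z z' hu' hx
  constructor
  · -- closability
    intro x y₁ y₂ h₁ h₂
    have hkey2 : ∀ u' ∈ F.Dfin, ∀ q ∈ graphClos F.Dfin (A.U z z'),
        (inner ℂ u' (q : 𝓗 × 𝓗).2 : ℂ)
          = inner ℂ (A.Ustar (starRingEnd ℂ z') (starRingEnd ℂ z) u') q.1 := by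
      intro u' hu' q hq
      have hS : IsClosed {q : 𝓗 × 𝓗 | (inner ℂ u' q.2 : ℂ)
          = inner ℂ (A.Ustar (starRingEnd ℂ z') (starRingEnd ℂ z) u') q.1} :=
        isClosed_eq (continuous_const.inner continuous_snd)
          (continuous_const.inner continuous_fst)
      have hsub : {p : 𝓗 × 𝓗 | p.1 ∈ F.Dfin ∧ p.2 = A.U z z' p.1}
          ⊆ {q : 𝓗 × 𝓗 | (inner ℂ u' q.2 : ℂ)
              = inner ℂ (A.Ustar (starRingEnd ℂ z') (starRingEnd ℂ z) u') q.1} := by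
        rintro ⟨a, b⟩ ⟨ha, hb⟩
        simp only [Set.mem_setOf_eq] at *
        rw [hb]
        exact (key u' hu' a ha).symm
      exact closure_minimal hsub hS hq
    have hy : ∀ u' ∈ F.Dfin, (inner ℂ u' (y₁ - y₂) : ℂ) = 0 := by
      intro u' hu'
      have e₁ := hkey2 u' hu' (x, y₁) h₁
      have e₂ := hkey2 u' hu' (x, y₂) h₂
      simp only at e₁ e₂
      rw [inner_sub_right, e₁, e₂, sub_self]
    have hclosed : IsClosed {u' : 𝓗 | (inner ℂ u' (y₁ - y₂) : ℂ) = 0} :=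
      isClosed_eq (continuous_id.inner continuous_const) continuous_const
    have hall : ∀ u' : 𝓗, (inner ℂ u' (y₁ - y₂) : ℂ) = 0 := by
      intro u'
      have : closure F.Dfin ⊆ {u' : 𝓗 | (inner ℂ u' (y₁ - y₂) : ℂ) = 0} :=
        closure_minimal hy hclosed
      have huniv := (FreeData.Dfin_dense (F := F)).closure_eq
      rw [huniv] at this
      exact this (Set.mem_univ u')
    have := hall (y₁ - y₂)
    rw [inner_self_eq_zero] at this
    exact sub_eq_zero.1 this
  · -- adjoint inclusion
    intro y w hyw x hx
    have hS : IsClosed {q : 𝓗 × 𝓗 | (inner ℂ q.1 (A.U z z' x) : ℂ) = inner ℂ q.2 x} :=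
      isClosed_eq (continuous_fst.inner continuous_const)
        (continuous_snd.inner continuous_const)
    have hsub : {p : 𝓗 × 𝓗 | p.1 ∈ F.Dfin
          ∧ p.2 = A.Ustar (starRingEnd ℂ z') (starRingEnd ℂ z) p.1}
        ⊆ {q : 𝓗 × 𝓗 | (inner ℂ q.1 (A.U z z' x) : ℂ) = inner ℂ q.2 x} := by
      rintro ⟨a, b⟩ ⟨ha, hb⟩
      simp only [Set.mem_setOf_eq] at *
      rw [hb]
      exact (key a ha x hx).symm
    exact closure_minimal hsub hS hyw
end
end

section
/- Let A₁,…,Aₙ be of C₀-class. Then for every Ψ ∈ D_fin, the map ℂⁿ ∋ (z₁,…,zₙ) ↦ A₁(z₁)…Aₙ(zₙ)Ψ ∈ ℋ is strongly analytic on all of ℂⁿ (i.e. it admits an absolutely convergent power series expansion in z₁,…,zₙ near each point). -/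
open MeasureTheory Complex Filter Set

noncomputable section

/-- The operator product `A₁(z₁) A₂(z₂) ⋯ Aₙ(zₙ) Ψ`. -/
def opProdMulti {𝓗 : Type*} [NormedAddCommGroup 𝓗] [InnerProductSpace ℂ 𝓗]
    [CompleteSpace 𝓗] {F : FreeData 𝓗} {n : ℕ}
    (As : Fin n → C0 F) (z : Fin n → ℂ) (Ψ : 𝓗) : 𝓗 :=
  (List.ofFn fun i => ((As i).Az (z i) : 𝓗 →ₗ[ℂ] 𝓗)).foldr (fun g y => g y) Ψ

set_option maxHeartbeats 1000000
set_option synthInstance.maxHeartbeats 200000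

section Aux

variable {𝓗 : Type*} [NormedAddCommGroup 𝓗] [InnerProductSpace ℂ 𝓗] [CompleteSpace 𝓗]

noncomputable local instance (p : Submodule ℂ 𝓗) : NormedRing (p →L[ℂ] p) :=
  ContinuousLinearMap.toNormedRing

local instance (p : Submodule ℂ 𝓗) : NormedAlgebra ℂ (p →L[ℂ] p) :=
  ContinuousLinearMap.toNormedAlgebra

/-- Lift a `HasDerivAt` statement from the ambient space to a submodule. -/
lemma hasDerivAt_of_coe {p : Submodule ℂ 𝓗} {f : ℂ → p} {d : p} {z : ℂ}
    (h : HasDerivAt (fun w => (f w : 𝓗)) (d : 𝓗) z) : HasDerivAt f d z := by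
  rw [hasDerivAt_iff_isLittleO] at h ⊢
  rw [← Asymptotics.isLittleO_norm_left] at h ⊢
  have he : (fun w => ‖f w - f z - (w - z) • d‖)
      = fun w => ‖(f w : 𝓗) - (f z : 𝓗) - (w - z) • (d : 𝓗)‖ := by
    funext w; simp
  rw [he]; exact h

/-- `H₀` restricted to the spectral subspace `V E`, as a continuous linear map. -/
noncomputable def FreeData.Hres (F : FreeData 𝓗) (E : ℝ) (hE : 0 ≤ E) :
    F.V E →L[ℂ] F.V E :=
  LinearMap.mkContinuous (F.H0.restrict (fun x hx => F.H0_mem E x hx)) E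
    (fun x => by
      simpa using F.H0_norm E hE x x.2)

/-- `i H₀` restricted to `V E`, the generator of `W` on `V E`. -/
noncomputable def FreeData.gen (F : FreeData 𝓗) (E : ℝ) (hE : 0 ≤ E) :
    F.V E →L[ℂ] F.V E :=
  Complex.I • F.Hres E hE

@[simp] lemma FreeData.gen_apply_coe (F : FreeData 𝓗) (E : ℝ) (hE : 0 ≤ E) (x : F.V E) :
    ((F.gen E hE x : F.V E) : 𝓗) = Complex.I • F.H0 (x : 𝓗) := rfl

/-- On `V E`, the one-parameter group `W` is given by the operator exponential of `z • iH₀`. -/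
lemma FreeData.W_eq_exp (F : FreeData 𝓗) (E : ℝ) (hE : 0 ≤ E) (x : F.V E) (z : ℂ) :
    F.W z (x : 𝓗) = (NormedSpace.exp (z • F.gen E hE) x : 𝓗) := by
  haveI : CompleteSpace (F.V E) := (F.V_closed E).completeSpace_coe
  set a : F.V E →L[ℂ] F.V E := F.gen E hE with ha
  set u : ℂ → F.V E := fun w => ⟨F.W w (x : 𝓗), F.W_mem w E x x.2⟩ with hu
  have hud : ∀ w : ℂ, HasDerivAt u (a (u w)) w := by
    intro w
    refine hasDerivAt_of_coe ?_
    have h1 := F.W_deriv E (x : 𝓗) x.2 w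
    have h2 : ((a (u w) : F.V E) : 𝓗) = Complex.I • F.H0 (F.W w (x : 𝓗)) := rfl
    rw [h2]
    exact h1
  -- the function `w ↦ exp (w • -a) (u w)` has zero derivative
  have hzero : ∀ w : ℂ,
      HasDerivAt (fun v : ℂ => (NormedSpace.exp (v • -a)) (u v)) 0 w := by
    intro w
    have hc := hasDerivAt_exp_smul_const (𝕂 := ℂ) (-a) w
    have := hc.clm_apply (hud w)
    refine this.congr_deriv ?_
    rw [ContinuousLinearMap.mul_apply]
    simp
  have hconst : ∀ w : ℂ,
      (NormedSpace.exp (w • -a)) (u w) = (NormedSpace.exp ((0:ℂ) • -a)) (u 0) :=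
    fun w => is_const_of_deriv_eq_zero
      (fun v => (hzero v).differentiableAt) (fun v => (hzero v).deriv) w 0
  have h0 : (NormedSpace.exp ((0:ℂ) • -a)) (u 0) = x := by
    rw [zero_smul, NormedSpace.exp_zero]
    simp only [ContinuousLinearMap.one_apply]
    exact Subtype.ext (F.W_zero (x : 𝓗))
  have hexp : (NormedSpace.exp (z • a)) ((NormedSpace.exp (z • -a)) (u z)) = u z := by
    let +nondep : NormedAlgebra ℚ (F.V E →L[ℂ] F.V E) := .restrictScalars ℚ ℂ _
    rw [← ContinuousLinearMap.mul_apply, ← NormedSpace.exp_add_of_commute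
      (by simpa using (Commute.refl (z • a)).neg_right)]
    simp [NormedSpace.exp_zero]
  have : u z = (NormedSpace.exp (z • a)) x := by
    rw [← hexp, hconst z, h0]
  have := congrArg (Subtype.val) this
  simpa [hu] using this

/-- `z ↦ exp (z • a)` is entire, for `a` in a Banach algebra. -/
lemma analyticAt_exp_smul {𝔸 : Type*} [NormedRing 𝔸] [NormedAlgebra ℂ 𝔸] [CompleteSpace 𝔸]
    (a : 𝔸) (z : ℂ) : AnalyticAt ℂ (fun w : ℂ => NormedSpace.exp (w • a)) z :=
 by
  have h : AnalyticAt ℂ (fun w : ℂ => w • a) z := analyticAt_id.smul analyticAt_const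
  have := AnalyticAt.comp (g := NormedSpace.exp) (f := fun w : ℂ => w • a) (x := z)
    (NormedSpace.exp_analytic (𝕂 := ℂ) _) h
  exact this

namespace C0

variable {F : FreeData 𝓗}

/-- `A` restricted to `V E`, as a continuous linear map into `V (E + b)`. -/
noncomputable def opRes (A : C0 F) (E : ℝ) (hE : 0 ≤ E) :
    F.V E →L[ℂ] F.V (E + A.b) :=
  LinearMap.mkContinuous (A.op.restrict (fun x hx => A.map_V E hE x hx))
    (A.C * Real.sqrt (E + 1))
    (fun x => by
      simpa using A.norm_bound E hE x x.2)

@[simp] lemma opRes_apply_coe (A : C0 F) (E : ℝ) (hE : 0 ≤ E) (x : F.V E) :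
    ((A.opRes E hE x : F.V (E + A.b)) : 𝓗) = A.op (x : 𝓗) := rfl

/-- The conjugated operator `A(ζ)` restricted to `V E`, as a continuous linear map valued,
analytic family. -/
noncomputable def AzRes (A : C0 F) (E : ℝ) (hE : 0 ≤ E) (ζ : ℂ) :
    F.V E →L[ℂ] F.V (E + A.b) :=
  (NormedSpace.exp (ζ • F.gen (E + A.b) (add_nonneg hE A.b_nonneg))).comp
    ((A.opRes E hE).comp (NormedSpace.exp ((-ζ) • F.gen E hE)))

lemma AzRes_analytic (A : C0 F) (E : ℝ) (hE : 0 ≤ E) (ζ : ℂ) :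
    AnalyticAt ℂ (fun w : ℂ => A.AzRes E hE w) ζ := by
  haveI : CompleteSpace (F.V E) := (F.V_closed E).completeSpace_coe
  haveI : CompleteSpace (F.V (E + A.b)) := (F.V_closed (E + A.b)).completeSpace_coe
  have h1 : AnalyticAt ℂ
      (fun w : ℂ => NormedSpace.exp (w • F.gen (E + A.b) (add_nonneg hE A.b_nonneg))) ζ :=
    analyticAt_exp_smul _ ζ
  have h2 : AnalyticAt ℂ
      (fun w : ℂ => NormedSpace.exp ((-w) • F.gen E hE)) ζ := by
    have := analyticAt_exp_smul (F.gen E hE) (-ζ)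
    exact this.comp (analyticAt_id.neg)
  have h3 : AnalyticAt ℂ
      (fun w : ℂ => (A.opRes E hE).comp (NormedSpace.exp ((-w) • F.gen E hE))) ζ :=
    ((ContinuousLinearMap.compL ℂ (F.V E) (F.V E) (F.V (E + A.b))
        (A.opRes E hE)).analyticAt _).comp h2
  exact ((ContinuousLinearMap.compL ℂ (F.V E) (F.V (E + A.b))
      (F.V (E + A.b))).analyticAt_bilinear _).comp₂ h1 h3

lemma AzRes_coe (A : C0 F) (E : ℝ) (hE : 0 ≤ E) (ζ : ℂ) (x : F.V E) :
    ((A.AzRes E hE ζ x : F.V (E + A.b)) : 𝓗) = A.Az ζ (x : 𝓗) := by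
  have hb : 0 ≤ E + A.b := add_nonneg hE A.b_nonneg
  have h1 : F.W (-ζ) (x : 𝓗) = ((NormedSpace.exp ((-ζ) • F.gen E hE)) x : 𝓗) :=
    F.W_eq_exp E hE x (-ζ)
  have h2 := F.W_eq_exp (E + A.b) hb
    ((A.opRes E hE) ((NormedSpace.exp ((-ζ) • F.gen E hE)) x)) ζ
  simp only [C0.Az, LinearMap.coe_comp, Function.comp_apply, AzRes,
    ContinuousLinearMap.coe_comp', Function.comp_apply]
  rw [opRes_apply_coe] at h2
  rw [← h1] at h2
  exact h2.symm

end C0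

/-- The inductive heart of Statement 2: the product `A₁(z₁)⋯Aₙ(zₙ)Ψ` coincides with an
analytic function taking values in some spectral subspace `V E'`. -/
lemma key_analytic {F : FreeData 𝓗} :
    ∀ (n : ℕ) (As : Fin n → C0 F) (E : ℝ), 0 ≤ E → ∀ (Ψ : 𝓗), Ψ ∈ F.V E →
    ∃ (E' : ℝ) (_ : 0 ≤ E') (g : (Fin n → ℂ) → F.V E'),
      AnalyticOnNhd ℂ g Set.univ ∧ ∀ z, (g z : 𝓗) = opProdMulti As z Ψ := by
  intro n
  induction n with
  | zero =>
    intro As E hE Ψ hΨ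
    exact ⟨E, hE, fun _ => ⟨Ψ, hΨ⟩, fun z _ => analyticAt_const, fun z => by
      simp [opProdMulti]⟩
  | succ m ih =>
    intro As E hE Ψ hΨ
    obtain ⟨E', hE', g, hg, hgval⟩ := ih (fun i => As i.succ) E hE Ψ hΨ
    set A := As 0 with hA
    refine ⟨E' + A.b, add_nonneg hE' A.b_nonneg,
      fun z => A.AzRes E' hE' (z 0) (g (fun i => z i.succ)), ?_, ?_⟩
    · intro z _
      -- analyticity of `z ↦ g (tail z)`
      have htail : AnalyticAt ℂ (fun z : Fin (m + 1) → ℂ => g (fun i => z i.succ)) z := by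
        have hc : AnalyticAt ℂ (fun z : Fin (m + 1) → ℂ => (fun i => z i.succ : Fin m → ℂ)) z := by
          exact (ContinuousLinearMap.pi (fun i : Fin m =>
            (ContinuousLinearMap.proj i.succ : ((Fin (m+1)) → ℂ) →L[ℂ] ℂ))).analyticAt z
        have := AnalyticAt.comp (g := g)
          (f := fun z : Fin (m + 1) → ℂ => (fun i => z i.succ : Fin m → ℂ))
          (hg _ (Set.mem_univ _)) hc
        exact this
      have hN : AnalyticAt ℂ (fun z : Fin (m + 1) → ℂ => A.AzRes E' hE' (z 0)) z := by
        have hc : AnalyticAt ℂ (fun z : Fin (m + 1) → ℂ => z 0) z := by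
          exact (ContinuousLinearMap.proj (R := ℂ) (φ := fun _ : Fin (m+1) => ℂ) 0).analyticAt z
        have := AnalyticAt.comp (g := fun ζ : ℂ => A.AzRes E' hE' ζ)
          (f := fun z : Fin (m + 1) → ℂ => z 0)
          (A.AzRes_analytic E' hE' (z 0)) hc
        exact this
      exact ((ContinuousLinearMap.id ℂ
        (F.V E' →L[ℂ] F.V (E' + A.b))).analyticAt_bilinear _).comp₂ hN htail
    · intro z
      have hsucc : opProdMulti As z Ψ
          = A.Az (z 0) (opProdMulti (fun i => As i.succ) (fun i => z i.succ) Ψ) := by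
        simp [opProdMulti, List.ofFn_succ]
        rfl
      rw [hsucc, ← hgval (fun i => z i.succ)]
      exact A.AzRes_coe E' hE' (z 0) _

end Aux

/-- Let `A₁, …, Aₙ` be of `C₀`-class.  Then for every `Ψ ∈ D_fin` the map
`ℂⁿ ∋ (z₁,…,zₙ) ↦ A₁(z₁)⋯Aₙ(zₙ)Ψ ∈ 𝓗` is strongly analytic on all of `ℂⁿ` (it admits an
absolutely convergent power series expansion near each point). -/
theorem statement2 {𝓗 : Type*} [NormedAddCommGroup 𝓗] [InnerProductSpace ℂ 𝓗]
    [CompleteSpace 𝓗] (F : FreeData 𝓗) (n : ℕ) (As : Fin n → C0 F)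
    (Ψ : 𝓗) (hΨ : Ψ ∈ F.Dfin) :
    AnalyticOnNhd ℂ (fun z : Fin n → ℂ => opProdMulti As z Ψ) Set.univ := by
  simp only [FreeData.Dfin, Set.mem_iUnion, SetLike.mem_coe] at hΨ
  obtain ⟨E, hE, hme⟩ := hΨ
  obtain ⟨E', hE', g, hg, hgval⟩ := key_analytic n As E hE Ψ hme
  intro z _
  have : AnalyticAt ℂ (fun z : Fin n → ℂ => ((g z : F.V E') : 𝓗)) z :=
    ((F.V E').subtypeL.analyticAt _).comp (hg z (Set.mem_univ _))
  exact this.congr (Filter.Eventually.of_forall (fun w => hgval w))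
end
end

section
/- Let A be of C₀-class and z, z' ∈ ℂ. Then on D_fin, for every n ≥ 0, the recursion formulas V_{n+1}(A;z,z') = (−i) ∫_{z'}^z dζ A(ζ) Vₙ(A;ζ,z') and V_{n+1}(A;z,z') = (−i) ∫_{z'}^z dζ Vₙ(A;z,ζ) A(ζ) hold, where the integrals are line integrals of analytic vector-valued functions depending only on the endpoints. -/
open MeasureTheory Complex Filter Set

noncomputable section

/-! ## Auxiliary machinery for Statement 4 -/

namespace Statement4Aux

variable {𝓗 : Type*} [NormedAddCommGroup 𝓗] [InnerProductSpace ℂ 𝓗] [CompleteSpace 𝓗]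
variable {F : FreeData 𝓗}

/-- Straight segment from `z'` to `z`. -/
def seg (z' z : ℂ) (t : ℝ) : ℂ := z' + t • (z - z')

lemma seg_zero (z' z : ℂ) : seg z' z 0 = z' := by simp [seg]

lemma seg_one (z' z : ℂ) : seg z' z 1 = z := by simp [seg]

lemma cont_seg (z' z : ℂ) : Continuous (seg z' z) :=
  continuous_const.add (continuous_id.smul continuous_const)

lemma seg_sub (z' z : ℂ) (t s : ℝ) :
    seg z' z t - seg z' z s = (t - s) • (z - z') := by
  simp only [seg, Complex.real_smul]
  push_cast
  ring

lemma seg_affine (z' z : ℂ) (s t r : ℝ) :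
    seg z' z s + r • (seg z' z t - seg z' z s) = seg z' z ((t - s) * r + s) := by
  rw [seg_sub]
  simp only [seg, Complex.real_smul]
  push_cast
  ring

/-- Continuity of `x ↦ W (ζ x) (h x)` for a path `h` inside `V E`. -/
lemma cont_W {X : Type*} [TopologicalSpace X] {E : ℝ} (hE : 0 ≤ E)
    {ζ : X → ℂ} (hζ : Continuous ζ) {h : X → 𝓗} (hh : Continuous h)
    (hmem : ∀ x, h x ∈ F.V E) : Continuous fun x => F.W (ζ x) (h x) := by
  rw [continuous_iff_continuousAt]
  intro x₀
  have hWx₀ : Continuous fun w : ℂ => F.W w (h x₀) := by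
    rw [continuous_iff_continuousAt]
    exact fun w => (F.W_deriv E (h x₀) (hmem x₀) w).continuousAt
  have hB : Filter.Tendsto (fun x => F.W (ζ x) (h x₀)) (nhds x₀) (nhds (F.W (ζ x₀) (h x₀))) :=
    (hWx₀.comp hζ).continuousAt
  have hA : Filter.Tendsto (fun x => F.W (ζ x) (h x - h x₀)) (nhds x₀) (nhds 0) := by
    have hbound : ∀ x, ‖F.W (ζ x) (h x - h x₀)‖ ≤ Real.exp (|(ζ x).im| * E) * ‖h x - h x₀‖ :=
      fun x => F.W_norm (ζ x) E hE _ (sub_mem (hmem x) (hmem x₀))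
    apply squeeze_zero_norm hbound
    have : Filter.Tendsto (fun x => Real.exp (|(ζ x).im| * E) * ‖h x - h x₀‖)
        (nhds x₀) (nhds (Real.exp (|(ζ x₀).im| * E) * ‖h x₀ - h x₀‖)) := by
      apply Filter.Tendsto.mul
      · exact (Real.continuous_exp.comp
          (((Complex.continuous_im.comp hζ).abs).mul continuous_const)).continuousAt
      · exact ((hh.sub continuous_const).norm).continuousAt
    simpa using this
  have : Filter.Tendsto (fun x => F.W (ζ x) (h x - h x₀) + F.W (ζ x) (h x₀))
      (nhds x₀) (nhds (0 + F.W (ζ x₀) (h x₀))) := hA.add hB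
  rw [zero_add] at this
  refine this.congr (fun x => ?_)
  rw [map_sub, sub_add_cancel]

/-- Continuity of `x ↦ T (h x)` for a linear map `T` bounded on a submodule containing
the path `h`. -/
lemma cont_bddLin {X : Type*} [TopologicalSpace X] (T : 𝓗 →ₗ[ℂ] 𝓗) {S : Submodule ℂ 𝓗}
    {K : ℝ} (hK : ∀ y ∈ S, ‖T y‖ ≤ K * ‖y‖) {h : X → 𝓗} (hh : Continuous h)
    (hmem : ∀ x, h x ∈ S) : Continuous fun x => T (h x) := by
  rw [continuous_iff_continuousAt]
  intro x₀
  have hA : Filter.Tendsto (fun x => T (h x - h x₀)) (nhds x₀) (nhds 0) := by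
    have hbound : ∀ x, ‖T (h x - h x₀)‖ ≤ K * ‖h x - h x₀‖ :=
      fun x => hK _ (sub_mem (hmem x) (hmem x₀))
    apply squeeze_zero_norm hbound
    have : Filter.Tendsto (fun x => K * ‖h x - h x₀‖) (nhds x₀)
        (nhds (K * ‖h x₀ - h x₀‖)) :=
      (continuous_const.mul ((hh.sub continuous_const).norm)).continuousAt
    simpa using this
  have : Filter.Tendsto (fun x => T (h x - h x₀) + T (h x₀))
      (nhds x₀) (nhds (0 + T (h x₀))) := hA.add tendsto_const_nhds
  rw [zero_add] at this
  refine this.congr (fun x => ?_)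
  rw [map_sub, sub_add_cancel]

lemma az_apply (A : C0 F) (ζ : ℂ) (x : 𝓗) :
    A.Az ζ x = F.W ζ (A.op (F.W (-ζ) x)) := rfl

lemma az_mem (A : C0 F) {E : ℝ} (hE : 0 ≤ E) (ζ : ℂ) {x : 𝓗} (hx : x ∈ F.V E) :
    A.Az ζ x ∈ F.V (E + A.b) :=
  F.W_mem _ _ _ (A.map_V E hE _ (F.W_mem _ _ _ hx))

lemma az_bound (A : C0 F) {M : ℝ} (hM : 0 ≤ M) (ζ : ℂ) :
    ∀ x ∈ F.V M, ‖A.Az ζ x‖ ≤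
      (Real.exp (|ζ.im| * (M + A.b)) * (A.C * Real.sqrt (M + 1)) *
        Real.exp (|ζ.im| * M)) * ‖x‖ := by
  intro x hx
  have h1 : F.W (-ζ) x ∈ F.V M := F.W_mem _ _ _ hx
  have h2 : A.op (F.W (-ζ) x) ∈ F.V (M + A.b) := A.map_V M hM _ h1
  have e1 : ‖F.W (-ζ) x‖ ≤ Real.exp (|ζ.im| * M) * ‖x‖ := by
    have := F.W_norm (-ζ) M hM x hx
    simpa [Complex.neg_im, abs_neg] using this
  have e2 : ‖A.op (F.W (-ζ) x)‖ ≤ A.C * Real.sqrt (M + 1) * ‖F.W (-ζ) x‖ :=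
    A.norm_bound M hM _ h1
  have e3 : ‖F.W ζ (A.op (F.W (-ζ) x))‖ ≤
      Real.exp (|ζ.im| * (M + A.b)) * ‖A.op (F.W (-ζ) x)‖ :=
    F.W_norm ζ (M + A.b) (by linarith [A.b_nonneg]) _ h2
  have hC : (0:ℝ) ≤ A.C * Real.sqrt (M + 1) :=
    mul_nonneg A.C_nonneg (Real.sqrt_nonneg _)
  rw [az_apply]
  calc ‖F.W ζ (A.op (F.W (-ζ) x))‖
      ≤ Real.exp (|ζ.im| * (M + A.b)) * ‖A.op (F.W (-ζ) x)‖ := e3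
    _ ≤ Real.exp (|ζ.im| * (M + A.b)) * (A.C * Real.sqrt (M + 1) * ‖F.W (-ζ) x‖) := by
        exact mul_le_mul_of_nonneg_left e2 (Real.exp_pos _).le
    _ ≤ Real.exp (|ζ.im| * (M + A.b)) *
          (A.C * Real.sqrt (M + 1) * (Real.exp (|ζ.im| * M) * ‖x‖)) := by
        refine mul_le_mul_of_nonneg_left ?_ (Real.exp_pos _).le
        exact mul_le_mul_of_nonneg_left e1 hC
    _ = (Real.exp (|ζ.im| * (M + A.b)) * (A.C * Real.sqrt (M + 1)) *
          Real.exp (|ζ.im| * M)) * ‖x‖ := by ring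

lemma cont_az (A : C0 F) {E : ℝ} (hE : 0 ≤ E) {X : Type*} [TopologicalSpace X]
    {ζ : X → ℂ} (hζ : Continuous ζ) {h : X → 𝓗} (hh : Continuous h)
    (hmem : ∀ x, h x ∈ F.V E) : Continuous fun x => A.Az (ζ x) (h x) := by
  have h1 : Continuous fun x => F.W (-ζ x) (h x) := cont_W hE hζ.neg hh hmem
  have m1 : ∀ x, F.W (-ζ x) (h x) ∈ F.V E := fun x => F.W_mem _ _ _ (hmem x)
  have h2 : Continuous fun x => A.op (F.W (-ζ x) (h x)) :=
    cont_bddLin A.op (fun y hy => A.norm_bound E hE y hy) h1 m1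
  have m2 : ∀ x, A.op (F.W (-ζ x) (h x)) ∈ F.V (E + A.b) :=
    fun x => A.map_V E hE _ (m1 x)
  have h3 : Continuous fun x => F.W (ζ x) (A.op (F.W (-ζ x) (h x))) :=
    cont_W (E := E + A.b) (by linarith [A.b_nonneg]) hζ h2 m2
  exact h3

/-- An interval integral of a continuous function with values in a closed submodule stays
inside the submodule. -/
lemma integral_mem {S : Submodule ℂ 𝓗} (hS : IsClosed (S : Set 𝓗)) {f : ℝ → 𝓗}
    (hf : Continuous f) (hm : ∀ t, f t ∈ S) (a b : ℝ) :
    (∫ t in a..b, f t) ∈ S := by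
  haveI : CompleteSpace S := hS.completeSpace_coe
  have hgc : Continuous fun t => (⟨f t, hm t⟩ : S) := hf.subtype_mk hm
  have h1 : (∫ t in a..b, f t)
      = S.subtypeL (∫ t in a..b, (⟨f t, hm t⟩ : S)) := by
    rw [← ContinuousLinearMap.intervalIntegral_comp_comm S.subtypeL
      (hgc.intervalIntegrable a b)]
    exact intervalIntegral.integral_congr fun u hu => rfl
  rw [h1]
  exact (∫ t in a..b, (⟨f t, hm t⟩ : S)).2

/-- A linear map which is bounded on a closed submodule commutes with interval integrals of
continuous functions valued in the submodule. -/
lemma map_integral (T : 𝓗 →ₗ[ℂ] 𝓗) {S : Submodule ℂ 𝓗} (hS : IsClosed (S : Set 𝓗))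
    {K : ℝ} (hK : ∀ y ∈ S, ‖T y‖ ≤ K * ‖y‖) {f : ℝ → 𝓗} (hf : Continuous f)
    (hm : ∀ t, f t ∈ S) (a b : ℝ) :
    T (∫ t in a..b, f t) = ∫ t in a..b, T (f t) := by
  haveI : CompleteSpace S := hS.completeSpace_coe
  have hgc : Continuous fun t => (⟨f t, hm t⟩ : S) := hf.subtype_mk hm
  set T' : S →L[ℂ] 𝓗 := (T.comp S.subtype).mkContinuous K
    (fun y => by simpa using hK y y.2) with hT'
  have h1 : (∫ t in a..b, f t)
      = S.subtypeL (∫ t in a..b, (⟨f t, hm t⟩ : S)) := by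
    rw [← ContinuousLinearMap.intervalIntegral_comp_comm S.subtypeL
      (hgc.intervalIntegrable a b)]
    exact intervalIntegral.integral_congr fun u hu => rfl
  have h2 : T (S.subtypeL (∫ t in a..b, (⟨f t, hm t⟩ : S)))
      = T' (∫ t in a..b, (⟨f t, hm t⟩ : S)) := rfl
  rw [h1, h2, ← ContinuousLinearMap.intervalIntegral_comp_comm T'
    (hgc.intervalIntegrable a b)]
  exact intervalIntegral.integral_congr fun u hu => rfl

/-- The recursion for `Vseq` rewritten along the segment from `z'` to `z` as a real interval
integral. -/
lemma Vseq_param (Φ : ℂ → 𝓗 → 𝓗) (z' z : ℂ) (n : ℕ) (s t : ℝ) (x : 𝓗) :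
    Vseq Φ (n + 1) (seg z' z t) (seg z' z s) x =
      (-Complex.I) • ((z - z') •
        ∫ u in s..t, Φ (seg z' z u) (Vseq Φ n (seg z' z u) (seg z' z s) x)) := by
  have hseg : ∀ r : ℝ, seg z' z s + r • (seg z' z t - seg z' z s)
      = seg z' z ((t - s) * r + s) := fun r => seg_affine z' z s t r
  show (-Complex.I) • lineIntegral
      (fun ζ => Φ ζ (Vseq Φ n ζ (seg z' z s) x)) (seg z' z s) (seg z' z t) = _
  congr 1
  unfold lineIntegral
  simp only [hseg]
  rw [seg_sub, Complex.real_smul, mul_smul, Complex.coe_smul, smul_comm]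
  congr 1
  have := intervalIntegral.smul_integral_comp_mul_add
    (f := fun u => Φ (seg z' z u) (Vseq Φ n (seg z' z u) (seg z' z s) x))
    (a := 0) (b := 1) (t - s) s
  simpa using this

/-- Joint continuity and spectral-subspace membership of `x ↦ Vₙ(A; seg (a x), seg (b x)) (g x)`
for continuous data valued in `V M`. -/
lemma vseq_cont_mem (A : C0 F) (z' z : ℂ) :
    ∀ (n : ℕ) {X : Type} [TopologicalSpace X] {a b : X → ℝ} {g : X → 𝓗} {M : ℝ},
      0 ≤ M → Continuous a → Continuous b → Continuous g → (∀ x, g x ∈ F.V M) →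
      Continuous (fun x =>
        Vseq (fun ζ y => A.Az ζ y) n (seg z' z (a x)) (seg z' z (b x)) (g x)) ∧
      ∀ x, Vseq (fun ζ y => A.Az ζ y) n (seg z' z (a x)) (seg z' z (b x)) (g x)
        ∈ F.V (M + n * A.b) := by
  intro n
  induction n with
  | zero =>
    intro X _ a b g M hM ha hb hg hmem
    exact ⟨hg, by simpa [Vseq] using hmem⟩
  | succ n ih =>
    intro X _inst a b g M hM ha hb hg hmem
    have hMn : 0 ≤ M + n * A.b :=
      add_nonneg hM (mul_nonneg (Nat.cast_nonneg n) A.b_nonneg)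
    obtain ⟨ic, im⟩ := ih (X := ℝ × X) (a := fun p => p.1) (b := fun p => b p.2)
      (g := fun p => g p.2) hM continuous_fst (hb.comp continuous_snd)
      (hg.comp continuous_snd) (fun p => hmem p.2)
    have hAc : Continuous fun p : ℝ × X => A.Az (seg z' z p.1)
        (Vseq (fun ζ y => A.Az ζ y) n (seg z' z p.1) (seg z' z (b p.2)) (g p.2)) :=
      cont_az A hMn ((cont_seg z' z).comp continuous_fst) ic im
    have hAm : ∀ p : ℝ × X, A.Az (seg z' z p.1)
        (Vseq (fun ζ y => A.Az ζ y) n (seg z' z p.1) (seg z' z (b p.2)) (g p.2))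
        ∈ F.V (M + n * A.b + A.b) := fun p => az_mem A hMn _ (im p)
    have hcast : M + (n + 1 : ℕ) * A.b = M + n * A.b + A.b := by push_cast; ring
    have hcontu : ∀ x : X, Continuous fun u : ℝ => A.Az (seg z' z u)
        (Vseq (fun ζ y => A.Az ζ y) n (seg z' z u) (seg z' z (b x)) (g x)) := fun x =>
      hAc.comp (continuous_id.prodMk continuous_const)
    constructor
    · have heq : (fun x => Vseq (fun ζ y => A.Az ζ y) (n + 1)
          (seg z' z (a x)) (seg z' z (b x)) (g x))
          = fun x => (-Complex.I) • ((z - z') • ∫ u in (b x)..(a x), A.Az (seg z' z u)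
              (Vseq (fun ζ y => A.Az ζ y) n (seg z' z u) (seg z' z (b x)) (g x))) :=
        funext fun x => Vseq_param _ z' z n (b x) (a x) (g x)
      rw [heq]
      apply Continuous.const_smul
      apply Continuous.const_smul
      have heq2 : (fun x => ∫ u in (b x)..(a x), A.Az (seg z' z u)
            (Vseq (fun ζ y => A.Az ζ y) n (seg z' z u) (seg z' z (b x)) (g x)))
          = fun x => (∫ u in (0:ℝ)..(a x), A.Az (seg z' z u)
              (Vseq (fun ζ y => A.Az ζ y) n (seg z' z u) (seg z' z (b x)) (g x)))
            - ∫ u in (0:ℝ)..(b x), A.Az (seg z' z u)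
              (Vseq (fun ζ y => A.Az ζ y) n (seg z' z u) (seg z' z (b x)) (g x)) :=
        funext fun x => (intervalIntegral.integral_interval_sub_left
          (((hcontu x)).intervalIntegrable 0 (a x))
          (((hcontu x)).intervalIntegrable 0 (b x))).symm
      rw [heq2]
      have huncurry : Continuous (Function.uncurry fun (x : X) (u : ℝ) =>
          A.Az (seg z' z u)
            (Vseq (fun ζ y => A.Az ζ y) n (seg z' z u) (seg z' z (b x)) (g x))) :=
        hAc.comp (continuous_snd.prodMk continuous_fst)
      exact (intervalIntegral.continuous_parametric_intervalIntegral_of_continuous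
          huncurry ha).sub
        (intervalIntegral.continuous_parametric_intervalIntegral_of_continuous
          huncurry hb)
    · intro x
      rw [Vseq_param, hcast]
      refine Submodule.smul_mem _ _ (Submodule.smul_mem _ _ ?_)
      exact integral_mem (F.V_closed _) (hcontu x) (fun u => hAm (u, x)) _ _

/-- Fubini on the triangle `a ≤ v ≤ u ≤ b` for a jointly continuous integrand. -/
lemma triangle_core {f : ℝ → ℝ → 𝓗} (hf : Continuous (Function.uncurry f))
    {a b : ℝ} (hab : a ≤ b) :
    (∫ u in a..b, ∫ v in a..u, f u v) = ∫ u in a..b, ∫ v in u..b, f v u := by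
  obtain ⟨M, hM⟩ : ∃ M, ∀ p ∈ Icc a b ×ˢ Icc a b, ‖Function.uncurry f p‖ ≤ M :=
    (isCompact_Icc.prod isCompact_Icc).exists_bound_of_continuousOn hf.continuousOn
  set μ : Measure ℝ := volume.restrict (Ioc a b) with hμ
  haveI : IsFiniteMeasure μ := ⟨by
    rw [hμ, Measure.restrict_apply_univ]; exact measure_Ioc_lt_top⟩
  set K : Set (ℝ × ℝ) := {p | p.2 ≤ p.1} with hKdef
  have hK : MeasurableSet K := (isClosed_le continuous_snd continuous_fst).measurableSet
  set g : ℝ × ℝ → 𝓗 := K.indicator (Function.uncurry f) with hgdef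
  have hmeas : AEStronglyMeasurable g (μ.prod μ) :=
    (hf.aestronglyMeasurable).indicator hK
  have hint : Integrable g (μ.prod μ) := by
    refine Integrable.mono' (integrable_const M) hmeas ?_
    have hprod : μ.prod μ = (volume.prod volume).restrict (Ioc a b ×ˢ Ioc a b) :=
      Measure.prod_restrict _ _
    have hae : ∀ᵐ p ∂(μ.prod μ), p ∈ Ioc a b ×ˢ Ioc a b := by
      rw [hprod]
      exact ae_restrict_mem (measurableSet_Ioc.prod measurableSet_Ioc)
    filter_upwards [hae] with p hp
    calc ‖g p‖ ≤ ‖Function.uncurry f p‖ := norm_indicator_le_norm_self _ _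
      _ ≤ M := hM p ⟨Ioc_subset_Icc_self hp.1, Ioc_subset_Icc_self hp.2⟩
  have L1 : (∫ u in a..b, ∫ v in a..u, f u v) = ∫ u, (∫ v, g (u, v) ∂μ) ∂μ := by
    rw [intervalIntegral.integral_of_le hab]
    refine setIntegral_congr_fun measurableSet_Ioc (fun u hu => ?_)
    have hind : ∀ v, g (u, v) = (Iic u).indicator (f u) v := by
      intro v
      by_cases h : v ≤ u
      · simp [hgdef, hKdef, Set.indicator_apply, h, Function.uncurry]
      · simp [hgdef, hKdef, Set.indicator_apply, h, Function.uncurry]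
    rw [intervalIntegral.integral_of_le hu.1.le]
    show (∫ v in Ioc a u, f u v) = ∫ v in Ioc a b, g (u, v)
    simp only [hind]
    rw [setIntegral_indicator measurableSet_Iic, Set.Ioc_inter_Iic,
      min_eq_right hu.2]
  have L2 : (∫ v, (∫ u, g (u, v) ∂μ) ∂μ) = ∫ u in a..b, ∫ v in u..b, f v u := by
    rw [intervalIntegral.integral_of_le hab]
    refine setIntegral_congr_fun measurableSet_Ioc (fun v hv => ?_)
    have hind : ∀ u, g (u, v) = (Ici v).indicator (fun u => f u v) u := by
      intro u
      by_cases h : v ≤ u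
      · simp [hgdef, hKdef, Set.indicator_apply, h, Function.uncurry]
      · simp [hgdef, hKdef, Set.indicator_apply, h, Function.uncurry]
    have hset : Ioc a b ∩ Ici v = Icc v b := by
      ext x
      simp only [Set.mem_inter_iff, Set.mem_Ioc, Set.mem_Ici, Set.mem_Icc]
      constructor
      · rintro ⟨⟨_, hxb⟩, hvx⟩; exact ⟨hvx, hxb⟩
      · rintro ⟨hvx, hxb⟩; exact ⟨⟨lt_of_lt_of_le hv.1 hvx, hxb⟩, hvx⟩
    show (∫ u, g (u, v) ∂μ) = ∫ u in v..b, f u v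
    simp only [hind]
    rw [show (∫ u, (Ici v).indicator (fun u => f u v) u ∂μ)
        = ∫ u in Ioc a b, (Ici v).indicator (fun u => f u v) u from rfl,
      setIntegral_indicator measurableSet_Ici, hset,
      integral_Icc_eq_integral_Ioc, ← intervalIntegral.integral_of_le hv.2]
  rw [L1, ← L2]
  exact integral_integral_swap hint

/-- Fubini on the triangle, arbitrary orientation. -/
lemma triangle {f : ℝ → ℝ → 𝓗} (hf : Continuous (Function.uncurry f)) (s t : ℝ) :
    (∫ u in s..t, ∫ v in s..u, f u v) = ∫ u in s..t, ∫ v in u..t, f v u := by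
  rcases le_total s t with h | h
  · exact triangle_core hf h
  · have hf' : Continuous (Function.uncurry fun u v => f v u) :=
      hf.comp continuous_swap
    have core := triangle_core (f := fun u v => f v u) hf' h
    have e1 : (∫ u in s..t, ∫ v in s..u, f u v)
        = ∫ u in t..s, ∫ v in u..s, f u v := by
      rw [intervalIntegral.integral_symm t s]
      rw [show (fun u => ∫ v in s..u, f u v) = fun u => -∫ v in u..s, f u v from
        funext fun u => intervalIntegral.integral_symm u s]
      rw [intervalIntegral.integral_neg, neg_neg]
    have e2 : (∫ u in s..t, ∫ v in u..t, f v u)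
        = ∫ u in t..s, ∫ v in t..u, f v u := by
      rw [intervalIntegral.integral_symm t s]
      rw [show (fun u => ∫ v in u..t, f v u) = fun u => -∫ v in t..u, f v u from
        funext fun u => intervalIntegral.integral_symm t u]
      rw [intervalIntegral.integral_neg, neg_neg]
    rw [e1, e2]
    exact core.symm

/-- **Key identity**: the two forms of the iterated integral agree along the segment. -/
lemma key (A : C0 F) (z' z : ℂ) {E : ℝ} (hE : 0 ≤ E) {Ψ : 𝓗} (hΨ : Ψ ∈ F.V E) :
    ∀ (n : ℕ) (s t : ℝ),
      (∫ u in s..t, A.Az (seg z' z u)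
          (Vseq (fun ζ y => A.Az ζ y) n (seg z' z u) (seg z' z s) Ψ))
      = ∫ u in s..t, Vseq (fun ζ y => A.Az ζ y) n (seg z' z t) (seg z' z u)
          (A.Az (seg z' z u) Ψ) := by
  intro n
  induction n with
  | zero => intro s t; rfl
  | succ n ih =>
    intro s t
    have hEb : 0 ≤ E + A.b := by linarith [A.b_nonneg]
    have hM : 0 ≤ E + A.b + n * A.b := by
      have : (0:ℝ) ≤ (n : ℝ) * A.b := mul_nonneg (Nat.cast_nonneg n) A.b_nonneg
      linarith
    -- P p = Vₙ(seg p.1, seg p.2) (A(seg p.2) Ψ)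
    obtain ⟨Pc, Pm⟩ := vseq_cont_mem A z' z n (X := ℝ × ℝ) (a := fun p => p.1)
      (b := fun p => p.2) (g := fun p => A.Az (seg z' z p.2) Ψ) hEb
      continuous_fst continuous_snd
      (cont_az A hE ((cont_seg z' z).comp continuous_snd) continuous_const fun _ => hΨ)
      (fun p => az_mem A hE _ hΨ)
    have Fc : Continuous fun p : ℝ × ℝ => A.Az (seg z' z p.1)
        (Vseq (fun ζ y => A.Az ζ y) n (seg z' z p.1) (seg z' z p.2)
          (A.Az (seg z' z p.2) Ψ)) :=
      cont_az A hM ((cont_seg z' z).comp continuous_fst) Pc Pm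
    have lhs_eq : ∀ u : ℝ, A.Az (seg z' z u)
        (Vseq (fun ζ y => A.Az ζ y) (n + 1) (seg z' z u) (seg z' z s) Ψ)
        = (-Complex.I) • ((z - z') • ∫ v in s..u, A.Az (seg z' z u)
            (Vseq (fun ζ y => A.Az ζ y) n (seg z' z u) (seg z' z v)
              (A.Az (seg z' z v) Ψ))) := by
      intro u
      rw [Vseq_param, ih s u, LinearMap.map_smul, LinearMap.map_smul]
      congr 2
      refine map_integral (A.Az (seg z' z u)) (F.V_closed _)
        (az_bound A hM (seg z' z u)) ?_ (fun v => Pm (u, v)) s u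
      exact Pc.comp (continuous_const.prodMk continuous_id)
    have rhs_eq : ∀ u : ℝ, Vseq (fun ζ y => A.Az ζ y) (n + 1) (seg z' z t)
        (seg z' z u) (A.Az (seg z' z u) Ψ)
        = (-Complex.I) • ((z - z') • ∫ v in u..t, A.Az (seg z' z v)
            (Vseq (fun ζ y => A.Az ζ y) n (seg z' z v) (seg z' z u)
              (A.Az (seg z' z u) Ψ))) := fun u =>
      Vseq_param (fun ζ y => A.Az ζ y) z' z n u t (A.Az (seg z' z u) Ψ)
    calc (∫ u in s..t, A.Az (seg z' z u)
          (Vseq (fun ζ y => A.Az ζ y) (n + 1) (seg z' z u) (seg z' z s) Ψ))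
        = ∫ u in s..t, (-Complex.I) • ((z - z') • ∫ v in s..u, A.Az (seg z' z u)
            (Vseq (fun ζ y => A.Az ζ y) n (seg z' z u) (seg z' z v)
              (A.Az (seg z' z v) Ψ))) := by simp only [lhs_eq]
      _ = (-Complex.I) • ((z - z') • ∫ u in s..t, ∫ v in s..u, A.Az (seg z' z u)
            (Vseq (fun ζ y => A.Az ζ y) n (seg z' z u) (seg z' z v)
              (A.Az (seg z' z v) Ψ))) := by
          rw [intervalIntegral.integral_smul, intervalIntegral.integral_smul]
      _ = (-Complex.I) • ((z - z') • ∫ u in s..t, ∫ v in u..t, A.Az (seg z' z v)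
            (Vseq (fun ζ y => A.Az ζ y) n (seg z' z v) (seg z' z u)
              (A.Az (seg z' z u) Ψ))) := by
          rw [triangle (f := fun u v => A.Az (seg z' z u)
            (Vseq (fun ζ y => A.Az ζ y) n (seg z' z u) (seg z' z v)
              (A.Az (seg z' z v) Ψ))) Fc s t]
      _ = ∫ u in s..t, Vseq (fun ζ y => A.Az ζ y) (n + 1) (seg z' z t)
            (seg z' z u) (A.Az (seg z' z u) Ψ) := by
          simp only [rhs_eq]
          rw [intervalIntegral.integral_smul, intervalIntegral.integral_smul]

end Statement4Aux

/-- Let `A` be of `C₀`-class and `z, z' ∈ ℂ`.  Then on `D_fin`, for every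
`n ≥ 0`, the recursion formulas
`V_{n+1}(A;z,z') = (-i) ∫_{z'}^z dζ A(ζ) Vₙ(A;ζ,z')` and
`V_{n+1}(A;z,z') = (-i) ∫_{z'}^z dζ Vₙ(A;z,ζ) A(ζ)` hold, where the integrals are line
integrals of analytic vector-valued functions depending only on the endpoints. -/
theorem statement4 {𝓗 : Type*} [NormedAddCommGroup 𝓗] [InnerProductSpace ℂ 𝓗]
    [CompleteSpace 𝓗] (F : FreeData 𝓗) (A : C0 F) (z z' : ℂ) (n : ℕ)
    (Ψ : 𝓗) (hΨ : Ψ ∈ F.Dfin) :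
    A.Vn (n + 1) z z' Ψ =
      (-Complex.I) • lineIntegral (fun ζ => A.Az ζ (A.Vn n ζ z' Ψ)) z' z ∧
    A.Vn (n + 1) z z' Ψ =
      (-Complex.I) • lineIntegral (fun ζ => A.Vn n z ζ (A.Az ζ Ψ)) z' z := by
  open Statement4Aux in
  constructor
  · rfl
  · obtain ⟨E, hE, hΨE⟩ := Set.mem_iUnion₂.mp hΨ
    rw [Set.mem_Ici] at hE
    rw [SetLike.mem_coe] at hΨE
    have h1 : seg z' z 1 = z := seg_one z' z
    have h0 : seg z' z 0 = z' := seg_zero z' z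
    have hkey := key A z' z hE hΨE n 0 1
    calc A.Vn (n + 1) z z' Ψ
        = Vseq (fun ζ y => A.Az ζ y) (n + 1) (seg z' z 1) (seg z' z 0) Ψ := by
          rw [h1, h0]; rfl
      _ = (-Complex.I) • ((z - z') • ∫ u in (0:ℝ)..1, A.Az (seg z' z u)
            (Vseq (fun ζ y => A.Az ζ y) n (seg z' z u) (seg z' z 0) Ψ)) :=
          Vseq_param _ z' z n 0 1 Ψ
      _ = (-Complex.I) • ((z - z') • ∫ u in (0:ℝ)..1,
            Vseq (fun ζ y => A.Az ζ y) n (seg z' z 1) (seg z' z u)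
              (A.Az (seg z' z u) Ψ)) := by rw [hkey]
      _ = (-Complex.I) • lineIntegral (fun ζ => A.Vn n z ζ (A.Az ζ Ψ)) z' z := by
          simp only [h1]; rfl
end
end

section
/- Let H be a self-adjoint operator in ℋ, bounded below, with ground energy E₀ := inf σ(H), and let P₀ := E_H({E₀}) be the orthogonal projection onto ker(H − E₀). Then for every ε > 0, every Borel function f : ℝ → ℂ, and every Ψ ∈ D(f(H)), one has lim_{T→∞} f(H) e^{iT(±1−iε)E₀} e^{−iT(±1−iε)H} Ψ = f(E₀) P₀ Ψ. -/
open MeasureTheory Complex Filter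
open scoped ENNReal NNReal Topology

noncomputable section

/-- Let `H` be a self-adjoint operator in a complex Hilbert space `𝓗`,
bounded below, with ground energy `E₀ = inf σ(H)` and `P₀ = E_H({E₀})` the orthogonal
projection onto `ker (H - E₀)`.  Then for every `ε > 0`, every Borel `f : ℝ → ℂ` and every
`Ψ ∈ D(f(H))`,
`lim_{T→∞} f(H) e^{iT(±1-iε)E₀} e^{-iT(±1-iε)H} Ψ = f(E₀) P₀ Ψ`.

Here, by the spectral theorem, `H` is presented in its spectral representation: a unitary
`U : 𝓗 ≃ Lp²(μ)` carries `H` into multiplication by the measurable function `h`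
(bounded below by `c`), so that `E₀ = inf σ(H)` is the essential infimum of `h`, the
functional calculus `φ(H)` is multiplication by `φ ∘ h`, and `P₀` is multiplication by the
indicator of `{h = E₀}`.  The vectors `f(H) e^{iT(±1-iε)E₀} e^{-iT(±1-iε)H} Ψ` (`T ≥ 0`)
and `f(E₀) P₀ Ψ` are described through `U` by the corresponding multipliers, and the limit
holds in the norm of `𝓗`. -/
theorem statement16 {𝓗 : Type*} [NormedAddCommGroup 𝓗] [InnerProductSpace ℂ 𝓗]
    [CompleteSpace 𝓗] {X : Type*} [MeasurableSpace X] (μ : Measure X)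
    (h : X → ℝ) (hh : Measurable h)
    (U : 𝓗 ≃ₗᵢ[ℂ] Lp ℂ 2 μ)
    (c : ℝ) (hbd : ∀ᵐ a ∂μ, c ≤ h a)
    (E₀ : ℝ) (hE₀ : E₀ = sInf {r : ℝ | 0 < μ {a | h a < r}})
    (ε : ℝ) (hε : 0 < ε) (sgn : ℝ) (hsgn : sgn = 1 ∨ sgn = -1)
    (f : ℝ → ℂ) (hf : Measurable f)
    (Ψ : 𝓗) (hΨ : MemLp (fun a => f (h a) * (U Ψ : X → ℂ) a) 2 μ) :
    (∃ g : ℝ → 𝓗, ∀ T : ℝ, 0 ≤ T →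
      (U (g T) : X → ℂ) =ᵐ[μ] fun a =>
        f (h a) * Complex.exp (Complex.I * (T : ℂ) * ((sgn : ℂ) - Complex.I * (ε : ℂ)) *
          ((E₀ : ℂ) - (h a : ℂ))) * (U Ψ : X → ℂ) a) ∧
    (∃ y₀ : 𝓗, (U y₀ : X → ℂ) =ᵐ[μ] fun a =>
      f E₀ * ({a : X | h a = E₀}.indicator (fun a => (U Ψ : X → ℂ) a) a)) ∧
    (∀ (g : ℝ → 𝓗) (y₀ : 𝓗),
      (∀ T : ℝ, 0 ≤ T →
        (U (g T) : X → ℂ) =ᵐ[μ] fun a =>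
          f (h a) * Complex.exp (Complex.I * (T : ℂ) * ((sgn : ℂ) - Complex.I * (ε : ℂ)) *
            ((E₀ : ℂ) - (h a : ℂ))) * (U Ψ : X → ℂ) a) →
      ((U y₀ : X → ℂ) =ᵐ[μ] fun a =>
        f E₀ * ({a : X | h a = E₀}.indicator (fun a => (U Ψ : X → ℂ) a) a)) →
      Tendsto g atTop (nhds y₀)) := by
  classical
  set dom : X → ℂ := fun a => f (h a) * (U Ψ : X → ℂ) a with hdom
  set m : ℝ → X → ℂ := fun T a =>
    f (h a) * Complex.exp (Complex.I * (T : ℂ) * ((sgn : ℂ) - Complex.I * (ε : ℂ)) *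
      ((E₀ : ℂ) - (h a : ℂ))) * (U Ψ : X → ℂ) a with hm
  set y : X → ℂ := fun a =>
    f E₀ * ({a : X | h a = E₀}.indicator (fun a => (U Ψ : X → ℂ) a) a) with hy
  have hUΨ : Measurable ((U Ψ : X → ℂ)) := (Lp.stronglyMeasurable (U Ψ)).measurable
  -- measurability of the multipliers
  have hm_meas : ∀ T : ℝ, Measurable (m T) := by
    intro T
    exact ((hf.comp hh).mul (Complex.measurable_exp.comp
      (measurable_const.mul (measurable_const.sub
        (Complex.measurable_ofReal.comp hh))))).mul hUΨ
  have hsetmeas : MeasurableSet {a : X | h a = E₀} := hh (measurableSet_singleton E₀)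
  have hy_meas : Measurable y :=
    measurable_const.mul (hUΨ.indicator hsetmeas)
  -- a.e. lower bound by E₀
  have hEle : ∀ᵐ a ∂μ, E₀ ≤ h a := by
    have hnull : ∀ r : ℝ, r < E₀ → μ {a | h a < r} = 0 := by
      intro r hr
      by_contra hne
      have hpos : 0 < μ {a | h a < r} := pos_iff_ne_zero.2 hne
      have hbddS : ∀ s ∈ {r : ℝ | 0 < μ {a | h a < r}}, c ≤ s := by
        intro s hs
        by_contra hcs
        push_neg at hcs
        have hsub : {a | h a < s} ⊆ {a | ¬ c ≤ h a} := by
          intro a ha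
          simp only [Set.mem_setOf_eq] at ha ⊢
          intro hca; linarith
        have h0 : μ {a | h a < s} = 0 := measure_mono_null hsub hbd
        simp only [Set.mem_setOf_eq, h0] at hs
        exact lt_irrefl 0 hs
      have : sInf {r : ℝ | 0 < μ {a | h a < r}} ≤ r :=
        csInf_le ⟨c, hbddS⟩ hpos
      rw [← hE₀] at this
      linarith
    have hunion : {a | h a < E₀} ⊆ ⋃ n : ℕ, {a | h a < E₀ - 1 / (n + 1)} := by
      intro a ha
      simp only [Set.mem_setOf_eq] at ha
      obtain ⟨n, hn⟩ := exists_nat_one_div_lt (by linarith : (0:ℝ) < E₀ - h a)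
      exact Set.mem_iUnion.2 ⟨n, by simp only [Set.mem_setOf_eq]; push_cast; linarith⟩
    have hnull2 : μ {a | h a < E₀} = 0 := by
      refine measure_mono_null hunion (measure_iUnion_null fun n => hnull _ ?_)
      have : (0:ℝ) < 1 / ((n:ℝ) + 1) := by positivity
      linarith
    refine measure_mono_null ?_ hnull2
    intro a ha
    simp only [Set.mem_setOf_eq] at ha ⊢
    exact lt_of_not_ge ha
  -- the modulus of the exponential factor
  have hexp : ∀ T : ℝ, ∀ a : X,
      ‖Complex.exp (Complex.I * (T : ℂ) * ((sgn : ℂ) - Complex.I * (ε : ℂ)) *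
        ((E₀ : ℂ) - (h a : ℂ)))‖ = Real.exp (T * ε * (E₀ - h a)) := by
    intro T a
    have harg : Complex.I * (T : ℂ) * ((sgn : ℂ) - Complex.I * (ε : ℂ)) *
        ((E₀ : ℂ) - (h a : ℂ)) =
        ((T * ε * (E₀ - h a) : ℝ) : ℂ) + ((T * sgn * (E₀ - h a) : ℝ) : ℂ) * Complex.I := by
      push_cast
      linear_combination (-(T:ℂ) * (ε:ℂ) * ((E₀:ℂ) - ((h a : ℝ):ℂ))) * Complex.I_sq
    rw [harg, Complex.norm_exp]
    congr 1
    simp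
  -- pointwise bound for T ≥ 0
  have hptbd : ∀ T : ℝ, 0 ≤ T → ∀ᵐ a ∂μ, ‖m T a‖ ≤ ‖dom a‖ := by
    intro T hT
    filter_upwards [hEle] with a ha
    simp only [hm, hdom, norm_mul]
    have h1 : ‖Complex.exp (Complex.I * (T : ℂ) * ((sgn : ℂ) - Complex.I * (ε : ℂ)) *
        ((E₀ : ℂ) - (h a : ℂ)))‖ ≤ 1 := by
      rw [hexp T a]
      exact Real.exp_le_one_iff.2 (mul_nonpos_of_nonneg_of_nonpos
        (mul_nonneg hT hε.le) (by linarith))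
    calc ‖f (h a)‖ * ‖Complex.exp (Complex.I * (T : ℂ) * ((sgn : ℂ) - Complex.I * (ε : ℂ)) *
            ((E₀ : ℂ) - (h a : ℂ)))‖ * ‖(U Ψ : X → ℂ) a‖
        ≤ ‖f (h a)‖ * 1 * ‖(U Ψ : X → ℂ) a‖ := by gcongr
      _ = ‖f (h a)‖ * ‖(U Ψ : X → ℂ) a‖ := by ring
  -- membership in L²
  have hmem : ∀ T : ℝ, 0 ≤ T → MemLp (m T) 2 μ := fun T hT =>
    MemLp.of_le hΨ (hm_meas T).aestronglyMeasurable (hptbd T hT)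
  have hymem : MemLp y 2 μ :=
    (((Lp.memLp (U Ψ)).indicator hsetmeas).const_mul (f E₀))
  -- pointwise domination of y
  have hybd : ∀ a : X, ‖y a‖ ≤ ‖dom a‖ := by
    intro a
    by_cases hae : h a = E₀
    · simp only [hy, hdom, Set.indicator_of_mem (show a ∈ {a : X | h a = E₀} from hae)]
      rw [← hae]
    · simp only [hy, hdom, Set.indicator_of_notMem (show a ∉ {a : X | h a = E₀} from hae),
        mul_zero, norm_zero, norm_mul]
      positivity
  refine ⟨⟨fun T => if hT : 0 ≤ T then U.symm ((hmem T hT).toLp (m T)) else 0, ?_⟩,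
    ⟨U.symm (hymem.toLp y), ?_⟩, ?_⟩
  · intro T hT
    simp only [dif_pos hT, LinearIsometryEquiv.apply_symm_apply]
    exact (hmem T hT).coeFn_toLp
  · simp only [LinearIsometryEquiv.apply_symm_apply]
    exact hymem.coeFn_toLp
  -- the main convergence statement
  intro g y₀ hg hy₀
  -- L² convergence of the multipliers by dominated convergence
  have hDCT : Tendsto (fun T => ∫⁻ a, ((‖m T a - y a‖₊ : ℝ≥0∞)) ^ 2 ∂μ) atTop (𝓝 0) := by
    have hfin : ∫⁻ a, ((2 * ‖dom a‖₊ : ℝ≥0∞)) ^ 2 ∂μ ≠ ⊤ := by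
      have hd : ∫⁻ a, (‖dom a‖₊ : ℝ≥0∞) ^ ((2:ℝ≥0∞).toReal) ∂μ < ⊤ :=
        lintegral_rpow_enorm_lt_top_of_eLpNorm_lt_top two_ne_zero ENNReal.ofNat_ne_top hΨ.2
      have hd2 : ∫⁻ a, (‖dom a‖₊ : ℝ≥0∞) ^ 2 ∂μ < ⊤ := by
        refine lt_of_eq_of_lt (lintegral_congr fun a => ?_) hd
        rw [show ((2:ℝ≥0∞).toReal) = ((2:ℕ):ℝ) by simp, ENNReal.rpow_natCast]
      have hrw : ∫⁻ a, ((2 * ‖dom a‖₊ : ℝ≥0∞)) ^ 2 ∂μ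
          = 4 * ∫⁻ a, (‖dom a‖₊ : ℝ≥0∞) ^ 2 ∂μ := by
        rw [← lintegral_const_mul' (4 : ℝ≥0∞) _ (by norm_num)]
        exact lintegral_congr fun a => by ring
      rw [hrw]
      exact ENNReal.mul_ne_top (by norm_num) hd2.ne
    have := tendsto_lintegral_filter_of_dominated_convergence (μ := μ) (l := atTop)
      (F := fun T a => ((‖m T a - y a‖₊ : ℝ≥0∞)) ^ 2) (f := fun _ => (0:ℝ≥0∞))
      (bound := fun a => ((2 * ‖dom a‖₊ : ℝ≥0∞)) ^ 2)
      (Eventually.of_forall fun T => (((hm_meas T).sub hy_meas).nnnorm.coe_nnreal_ennreal).pow_const 2)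
      ?_ hfin ?_
    · simpa using this
    · filter_upwards [eventually_ge_atTop (0:ℝ)] with T hT
      filter_upwards [hptbd T hT] with a ha
      have hle : ‖m T a - y a‖₊ ≤ 2 * ‖dom a‖₊ := by
        rw [← NNReal.coe_le_coe]
        push_cast
        calc ‖m T a - y a‖ ≤ ‖m T a‖ + ‖y a‖ := norm_sub_le _ _
          _ ≤ ‖dom a‖ + ‖dom a‖ := add_le_add ha (hybd a)
          _ = 2 * ‖dom a‖ := by ring
      gcongr
      exact_mod_cast hle
    · filter_upwards [hEle] with a ha
      by_cases hae : h a = E₀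
      · have hz : ∀ T : ℝ, m T a - y a = 0 := by
          intro T
          have h0 : ((E₀ : ℂ) - (h a : ℂ)) = 0 := by rw [hae]; ring
          simp only [hm, hy, h0, mul_zero, Complex.exp_zero, mul_one,
            Set.indicator_of_mem (show a ∈ {a : X | h a = E₀} from hae)]
          rw [hae]
          ring
        have : (fun T : ℝ => ((‖m T a - y a‖₊ : ℝ≥0∞)) ^ 2) = fun _ => 0 := by
          funext T; rw [hz T]; simp
        rw [this]
        exact tendsto_const_nhds
      · have hgt : E₀ < h a := lt_of_le_of_ne ha (Ne.symm hae)
        have hy0 : y a = 0 := by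
          simp [hy, Set.indicator_of_notMem (show a ∉ {a : X | h a = E₀} from hae)]
        have hlim : Tendsto (fun T => m T a) atTop (𝓝 0) := by
          have hb : ∀ T : ℝ, ‖m T a‖ =
              ‖f (h a)‖ * Real.exp (T * ε * (E₀ - h a)) * ‖(U Ψ : X → ℂ) a‖ := fun T => by
            simp only [hm, norm_mul, hexp T a]
          have h1 : Tendsto (fun T : ℝ => (ε * (E₀ - h a)) * T) atTop atBot :=
            (tendsto_const_mul_atBot_of_neg (show ε * (E₀ - h a) < 0 by nlinarith)).2 tendsto_id
          have h2 := Real.tendsto_exp_atBot.comp h1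
          have h3 : Tendsto (fun T : ℝ => Real.exp (T * ε * (E₀ - h a))) atTop (𝓝 0) := by
            refine h2.congr fun T => ?_
            simp only [Function.comp]
            ring_nf
          have h4 := (h3.const_mul ‖f (h a)‖).mul_const ‖(U Ψ : X → ℂ) a‖
          simp only [mul_zero, zero_mul] at h4
          exact squeeze_zero_norm (fun T => le_of_eq (hb T)) h4
        have hcont : Tendsto (fun z : ℂ => ((‖z‖₊ : ℝ≥0∞)) ^ 2) (𝓝 0) (𝓝 0) := by
          have := (ENNReal.continuous_coe.comp (continuous_nnnorm.pow 2)).tendsto (0:ℂ)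
          convert this using 2 <;> simp [ENNReal.coe_pow]
        have := hcont.comp hlim
        simp only [Function.comp_def] at this
        simpa [hy0] using this
  have key : Tendsto (fun T => eLpNorm (fun a => m T a - y a) 2 μ) atTop (𝓝 0) := by
    have hformula : ∀ T : ℝ, eLpNorm (fun a => m T a - y a) 2 μ =
        (∫⁻ a, ((‖m T a - y a‖₊ : ℝ≥0∞)) ^ 2 ∂μ) ^ (1 / 2 : ℝ) := by
      intro T
      have h2 : ∫⁻ a, (‖m T a - y a‖₊ : ℝ≥0∞) ^ ((2:ℝ≥0∞).toReal) ∂μ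
          = ∫⁻ a, ((‖m T a - y a‖₊ : ℝ≥0∞)) ^ 2 ∂μ :=
        lintegral_congr fun a => by
          rw [show ((2:ℝ≥0∞).toReal) = ((2:ℕ):ℝ) by simp, ENNReal.rpow_natCast]
      rw [eLpNorm_eq_lintegral_rpow_enorm_toReal two_ne_zero ENNReal.ofNat_ne_top]; simp only [enorm_eq_nnnorm]; rw [h2]
      norm_num
    have := (ENNReal.continuous_rpow_const (y := (1/2 : ℝ))).tendsto 0 |>.comp hDCT
    simp only [Function.comp_def] at this
    have h0 : ((0:ℝ≥0∞)) ^ (1/2 : ℝ) = 0 := ENNReal.zero_rpow_of_pos (by norm_num)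
    rw [h0] at this
    refine Tendsto.congr (fun T => (hformula T).symm) this
  -- transfer back to 𝓗
  have hnorm : ∀ᶠ T in atTop, ‖g T - y₀‖ = (eLpNorm (fun a => m T a - y a) 2 μ).toReal := by
    filter_upwards [eventually_ge_atTop (0:ℝ)] with T hT
    have h1 : ‖g T - y₀‖ = ‖U (g T) - U y₀‖ := by
      rw [← map_sub, U.norm_map]
    rw [h1, Lp.norm_def]
    congr 1
    apply eLpNorm_congr_ae
    filter_upwards [Lp.coeFn_sub (U (g T)) (U y₀), hg T hT, hy₀] with a h2 h3 h4
    rw [h2]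
    simp only [Pi.sub_apply]
    rw [h3, h4]
  have h5 : Tendsto (fun T => (eLpNorm (fun a => m T a - y a) 2 μ).toReal) atTop (𝓝 0) := by
    have := (ENNReal.tendsto_toReal (show (0:ℝ≥0∞) ≠ ⊤ by simp)).comp key
    simpa [Function.comp_def] using this
  have h6 : Tendsto (fun T => ‖g T - y₀‖) atTop (𝓝 0) :=
    h5.congr' (hnorm.mono fun T hT => hT.symm)
  exact tendsto_iff_norm_sub_tendsto_zero.mpr h6
end
end
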